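/- arXiv:cond-mat/0107260 — 7 statements merged into one kernel-verified Lean document; each statement's English description precedes it below -/
import Mathlib

section
/- Let L, M, K be natural numbers. For every coefficient function g : Finset(Fin L) → ℂ and every finite set S ⊆ Fin L of sites, the K-th power of the total spin-lowering operator satisfies ((S⁻)^K g)(S) = K! · Σ_{T ⊆ S, |T| = |S| − K} g(T). In particular, if |S| = M + K then (1/K!)·((S⁻)^K g)(S) = Σ_{T ⊆ S, |T| = M} g(T); i.e., the coefficient of (1/K!)(S⁻)^K applied to a state with M-down-spin amplitudes g equals the sum of g over all M-element subsets of the down-spin positions (Proposition A.1, eq. (A.2)/(1.8) of the paper). -/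
open Finset

/-- The total spin-lowering operator `S⁻` acting on coefficient functions of a
spin-1/2 chain of `L` sites: `(S⁻ g)(S) = Σ_{x ∈ S} g(S \ {x})`. -/
noncomputable def lowerOp (L : ℕ) (g : Finset (Fin L) → ℂ) : Finset (Fin L) → ℂ :=
  fun S => ∑ x ∈ S, g (S.erase x)

lemma lower_aux (L K : ℕ) (g : Finset (Fin L) → ℂ) :
    ∀ S : Finset (Fin L), (lowerOp L)^[K] g S
      = (Nat.factorial K : ℂ) *
          ∑ T ∈ S.powerset.filter (fun T => T.card + K = S.card), g T := by
  induction K with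
  | zero =>
    intro S
    have h : S.powerset.filter (fun T => T.card = S.card) = {S} := by
      ext T
      simp only [mem_filter, mem_powerset, mem_singleton]
      constructor
      · rintro ⟨hsub, hcard⟩
        exact Finset.eq_of_subset_of_card_le hsub hcard.ge
      · rintro rfl; exact ⟨subset_rfl, rfl⟩
    simp [h]
  | succ K ih =>
    intro S
    rw [Function.iterate_succ_apply']
    show ∑ x ∈ S, (lowerOp L)^[K] g (S.erase x) = _
    have step1 : ∀ x ∈ S, (lowerOp L)^[K] g (S.erase x)
        = (Nat.factorial K : ℂ) *
          ∑ T ∈ S.powerset.filter (fun T => T.card + (K+1) = S.card),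
            (if x ∉ T then g T else 0) := by
      intro x hx
      rw [ih]
      congr 1
      have hset : (S.erase x).powerset.filter (fun T => T.card + K = (S.erase x).card)
          = ((S.powerset.filter (fun T => T.card + (K+1) = S.card)).filter (fun T => x ∉ T)) := by
        ext T
        simp only [mem_filter, mem_powerset, Finset.subset_erase, card_erase_of_mem hx]
        have hS : 1 ≤ S.card := card_pos.mpr ⟨x, hx⟩
        constructor
        · rintro ⟨⟨h1, h2⟩, h3⟩; exact ⟨⟨h1, by omega⟩, h2⟩
        · rintro ⟨⟨h1, h3⟩, h2⟩; exact ⟨⟨h1, h2⟩, by omega⟩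
      rw [hset, Finset.sum_filter]
    rw [Finset.sum_congr rfl step1, ← Finset.mul_sum, Finset.sum_comm]
    have step2 : ∀ T ∈ S.powerset.filter (fun T => T.card + (K+1) = S.card),
        (∑ x ∈ S, if x ∉ T then g T else 0) = ((K + 1 : ℕ) : ℂ) * g T := by
      intro T hT
      simp only [mem_filter, mem_powerset] at hT
      rw [← Finset.sum_filter, Finset.sum_const]
      have : S.filter (fun x => x ∉ T) = S \ T := by
        ext a; simp [Finset.mem_sdiff]
      rw [this, card_sdiff_of_subset hT.1]
      have : S.card - T.card = K + 1 := by omega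
      rw [this, nsmul_eq_mul]
    rw [Finset.sum_congr rfl step2, ← Finset.mul_sum, ← mul_assoc]
    congr 1
    rw [Nat.factorial_succ]
    push_cast
    ring

/-- Proposition A.1 (eq. (A.2)/(1.8)): the `K`-th power of the spin-lowering operator
satisfies `((S⁻)^K g)(S) = K! · Σ_{T ⊆ S, |T| = |S| − K} g(T)`; in particular if
`|S| = M + K` then `(1/K!)·((S⁻)^K g)(S) = Σ_{T ⊆ S, |T| = M} g(T)`. -/
theorem lowering_power_coeff (L M K : ℕ) (g : Finset (Fin L) → ℂ) (S : Finset (Fin L)) :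
    ((lowerOp L)^[K] g S
      = (Nat.factorial K : ℂ) *
          ∑ T ∈ S.powerset.filter (fun T => T.card + K = S.card), g T)
    ∧ (S.card = M + K →
        (1 / (Nat.factorial K : ℂ)) * ((lowerOp L)^[K] g S)
          = ∑ T ∈ S.powersetCard M, g T) := by
  refine ⟨lower_aux L K g S, fun hcard => ?_⟩
  rw [lower_aux L K g S]
  have hfac : (Nat.factorial K : ℂ) ≠ 0 := by
    exact_mod_cast Nat.factorial_ne_zero K
  rw [one_div, ← mul_assoc, inv_mul_cancel₀ hfac, one_mul]
  congr 1
  rw [Finset.powersetCard_eq_filter]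
  apply Finset.filter_congr
  intro T hT
  simp only [mem_powerset] at hT
  constructor
  · intro h; omega
  · intro h; omega
end

section
/- Let M ∈ ℕ, let P be a permutation of {1,…,M}, and let v₁,…,v_M ∈ ℂ satisfy v_j − v_k + 2i ≠ 0 for all 1 ≤ j < k ≤ M. Then the Bethe amplitude satisfies A_M(P)[v₁,…,v_M] = ∏_{1≤j<k≤M} ((v_j − v_k − 2i)/(v_j − v_k + 2i))^{H(P⁻¹j − P⁻¹k)}, i.e., A_M(P)[v] equals the product of (v_j − v_k − 2i)/(v_j − v_k + 2i) over exactly those pairs j < k with P⁻¹j > P⁻¹k (Proposition III.1, eq. (2.10)). -/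
open Finset Equiv Equiv.Perm

lemma my_sign_eq_signAux {n : ℕ} (f : Perm (Fin n)) :
    Equiv.Perm.sign f = Equiv.Perm.signAux f := by
  refine Equiv.Perm.swap_induction_on f (by simp [signAux_one]) ?_
  intro g x y hxy ih
  rw [Equiv.Perm.sign_mul, signAux_mul, ih, sign_swap hxy, signAux_swap hxy]

lemma my_sign_prod {n : ℕ} (f : Perm (Fin n)) :
    Equiv.Perm.sign f
      = ∏ jk ∈ univ.filter (fun jk : Fin n × Fin n => jk.1 < jk.2),
          (if f jk.2 < f jk.1 then (-1 : ℤˣ) else 1) := by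
  rw [my_sign_eq_signAux]
  unfold Equiv.Perm.signAux
  refine Finset.prod_nbij' (fun x => (x.2, x.1)) (fun p => ⟨p.2, p.1⟩) ?_ ?_ ?_ ?_ ?_
  · intro x hx
    simp [Equiv.Perm.mem_finPairsLT.1 hx]
  · intro p hp
    exact Equiv.Perm.mem_finPairsLT.2 (by simpa using hp)
  · intro x _; rfl
  · intro p _; rfl
  · intro x hx
    have h2 : x.2 < x.1 := Equiv.Perm.mem_finPairsLT.1 hx
    have hne : f x.1 ≠ f x.2 := fun h => h2.ne' (f.injective h)
    simp only []
    rcases lt_or_ge (f x.1) (f x.2) with h | h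
    · rw [if_pos h.le, if_pos h]
    · rw [if_neg (fun h' => hne (le_antisymm h' h)), if_neg (h.lt_of_ne hne.symm).not_gt]

lemma my_sign_prod_complex {n : ℕ} (f : Perm (Fin n)) :
    ((Equiv.Perm.sign f : ℤ) : ℂ)
      = ∏ jk ∈ univ.filter (fun jk : Fin n × Fin n => jk.1 < jk.2),
          (if f jk.2 < f jk.1 then (-1 : ℂ) else 1) := by
  rw [my_sign_prod f]
  push_cast
  exact Finset.prod_congr rfl fun jk _ => by split <;> simp

/-- The Bethe amplitude `A_M(P)[v₁,…,v_M] = ε(P) · ∏_{j<k} (v_{Pj} − v_{Pk} + 2i)/(v_j − v_k + 2i)`. -/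
noncomputable def betheAmp (M : ℕ) (v : Fin M → ℂ) (P : Equiv.Perm (Fin M)) : ℂ :=
  (Equiv.Perm.sign P : ℤ) *
    ∏ jk ∈ univ.filter (fun jk : Fin M × Fin M => jk.1 < jk.2),
      (v (P jk.1) - v (P jk.2) + 2 * Complex.I) / (v jk.1 - v jk.2 + 2 * Complex.I)

/-- Proposition III.1 (eq. (2.10)): the Bethe amplitude equals the product of
`(v_j − v_k − 2i)/(v_j − v_k + 2i)` over exactly those pairs `j < k` with `P⁻¹j > P⁻¹k`. -/
theorem prop_III_1 (M : ℕ) (P : Equiv.Perm (Fin M)) (v : Fin M → ℂ)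
    (hv : ∀ j k : Fin M, j < k → v j - v k + 2 * Complex.I ≠ 0) :
    betheAmp M v P
      = ∏ jk ∈ univ.filter (fun jk : Fin M × Fin M => jk.1 < jk.2),
          (if P⁻¹ jk.2 < P⁻¹ jk.1 then
            (v jk.1 - v jk.2 - 2 * Complex.I) / (v jk.1 - v jk.2 + 2 * Complex.I)
          else 1) := by
  classical
  set s : Finset (Fin M × Fin M) := univ.filter (fun jk : Fin M × Fin M => jk.1 < jk.2) with hs
  have hmem : ∀ jk : Fin M × Fin M, jk ∈ s ↔ jk.1 < jk.2 := fun jk => by simp [hs]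
  let den : Fin M × Fin M → ℂ := fun jk => v jk.1 - v jk.2 + 2 * Complex.I
  let h : Fin M × Fin M → ℂ := fun jk =>
    if P⁻¹ jk.2 < P⁻¹ jk.1 then v jk.1 - v jk.2 - 2 * Complex.I else den jk
  let ε : Fin M × Fin M → ℂ := fun jk => if P jk.2 < P jk.1 then (-1 : ℂ) else 1
  let Φ : Fin M × Fin M → Fin M × Fin M := fun jk =>
    if P jk.1 < P jk.2 then (P jk.1, P jk.2) else (P jk.2, P jk.1)
  let Ψ : Fin M × Fin M → Fin M × Fin M := fun jk =>
    if P⁻¹ jk.1 < P⁻¹ jk.2 then (P⁻¹ jk.1, P⁻¹ jk.2) else (P⁻¹ jk.2, P⁻¹ jk.1)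
  have reindex : ∏ jk ∈ s, h (Φ jk) = ∏ jk ∈ s, h jk := by
    refine Finset.prod_nbij' Φ Ψ ?_ ?_ ?_ ?_ (fun jk _ => rfl)
    · intro jk hjk
      have hlt := (hmem jk).1 hjk
      have hne : P jk.1 ≠ P jk.2 := fun hcon => hlt.ne (P.injective hcon)
      rw [hmem]
      show (if P jk.1 < P jk.2 then (P jk.1, P jk.2) else (P jk.2, P jk.1)).1
        < (if P jk.1 < P jk.2 then (P jk.1, P jk.2) else (P jk.2, P jk.1)).2
      rcases lt_or_ge (P jk.1) (P jk.2) with hc | hc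
      · rw [if_pos hc]; exact hc
      · rw [if_neg hc.not_gt]; exact hc.lt_of_ne hne.symm
    · intro jk hjk
      have hlt := (hmem jk).1 hjk
      have hne : P⁻¹ jk.1 ≠ P⁻¹ jk.2 := fun hcon => hlt.ne (P⁻¹.injective hcon)
      rw [hmem]
      show (if P⁻¹ jk.1 < P⁻¹ jk.2 then (P⁻¹ jk.1, P⁻¹ jk.2) else (P⁻¹ jk.2, P⁻¹ jk.1)).1
        < (if P⁻¹ jk.1 < P⁻¹ jk.2 then (P⁻¹ jk.1, P⁻¹ jk.2) else (P⁻¹ jk.2, P⁻¹ jk.1)).2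
      rcases lt_or_ge (P⁻¹ jk.1) (P⁻¹ jk.2) with hc | hc
      · rw [if_pos hc]; exact hc
      · rw [if_neg hc.not_gt]; exact hc.lt_of_ne hne.symm
    · intro jk hjk
      have hlt := (hmem jk).1 hjk
      show Ψ (if P jk.1 < P jk.2 then (P jk.1, P jk.2) else (P jk.2, P jk.1)) = jk
      rcases lt_or_ge (P jk.1) (P jk.2) with hc | hc
      · rw [if_pos hc]
        show (if P⁻¹ (P jk.1) < P⁻¹ (P jk.2) then _ else _) = jk
        simp only [Equiv.Perm.inv_def, Equiv.symm_apply_apply]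
        rw [if_pos hlt]
      · rw [if_neg hc.not_gt]
        show (if P⁻¹ (P jk.2) < P⁻¹ (P jk.1) then _ else _) = jk
        simp only [Equiv.Perm.inv_def, Equiv.symm_apply_apply]
        rw [if_neg hlt.not_gt]
    · intro jk hjk
      have hlt := (hmem jk).1 hjk
      show Φ (if P⁻¹ jk.1 < P⁻¹ jk.2 then (P⁻¹ jk.1, P⁻¹ jk.2) else (P⁻¹ jk.2, P⁻¹ jk.1)) = jk
      rcases lt_or_ge (P⁻¹ jk.1) (P⁻¹ jk.2) with hc | hc
      · rw [if_pos hc]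
        show (if P (P⁻¹ jk.1) < P (P⁻¹ jk.2) then _ else _) = jk
        simp only [Equiv.Perm.inv_def, Equiv.apply_symm_apply]
        rw [if_pos hlt]
      · rw [if_neg hc.not_gt]
        show (if P (P⁻¹ jk.2) < P (P⁻¹ jk.1) then _ else _) = jk
        simp only [Equiv.Perm.inv_def, Equiv.apply_symm_apply]
        rw [if_neg hlt.not_gt]
  have key : ∏ jk ∈ s, (v (P jk.1) - v (P jk.2) + 2 * Complex.I)
      = (∏ jk ∈ s, ε jk) * ∏ jk ∈ s, h jk := by
    rw [← reindex, ← Finset.prod_mul_distrib]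
    refine Finset.prod_congr rfl fun jk hjk => ?_
    have hlt := (hmem jk).1 hjk
    have hne : P jk.1 ≠ P jk.2 := fun hcon => hlt.ne (P.injective hcon)
    show _ = (if P jk.2 < P jk.1 then (-1 : ℂ) else 1) * h (Φ jk)
    by_cases hc : P jk.2 < P jk.1
    · rw [if_pos hc]
      have hΦ : Φ jk = (P jk.2, P jk.1) := if_neg hc.not_gt
      rw [hΦ]
      show _ = -1 * (if P⁻¹ (P jk.1) < P⁻¹ (P jk.2) then v (P jk.2) - v (P jk.1) - 2 * Complex.I
        else v (P jk.2) - v (P jk.1) + 2 * Complex.I)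
      simp only [Equiv.Perm.inv_def, Equiv.symm_apply_apply]
      rw [if_pos hlt]
      ring
    · rw [if_neg hc]
      have hΦ : Φ jk = (P jk.1, P jk.2) :=
        if_pos (lt_of_le_of_ne (not_lt.1 hc) hne)
      rw [hΦ]
      show _ = 1 * (if P⁻¹ (P jk.2) < P⁻¹ (P jk.1) then v (P jk.1) - v (P jk.2) - 2 * Complex.I
        else v (P jk.1) - v (P jk.2) + 2 * Complex.I)
      simp only [Equiv.Perm.inv_def, Equiv.symm_apply_apply]
      rw [if_neg hlt.not_gt, one_mul]
  have hsign : ((Equiv.Perm.sign P : ℤ) : ℂ) = ∏ jk ∈ s, ε jk := my_sign_prod_complex P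
  have hεsq : (∏ jk ∈ s, ε jk) * (∏ jk ∈ s, ε jk) = 1 := by
    rw [← Finset.prod_mul_distrib]
    refine Finset.prod_eq_one fun jk _ => ?_
    show (if P jk.2 < P jk.1 then (-1 : ℂ) else 1) *
      (if P jk.2 < P jk.1 then (-1 : ℂ) else 1) = 1
    split <;> norm_num
  have hdenne : ∀ jk ∈ s, den jk ≠ 0 := fun jk hjk => hv _ _ ((hmem jk).1 hjk)
  calc betheAmp M v P
      = ((Equiv.Perm.sign P : ℤ) : ℂ) *
        ((∏ jk ∈ s, (v (P jk.1) - v (P jk.2) + 2 * Complex.I)) / ∏ jk ∈ s, den jk) := by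
        rw [betheAmp, ← Finset.prod_div_distrib]
    _ = ((∏ jk ∈ s, ε jk) * (∏ jk ∈ s, ε jk)) * ((∏ jk ∈ s, h jk) / ∏ jk ∈ s, den jk) := by
        rw [hsign, key]; ring
    _ = (∏ jk ∈ s, h jk) / ∏ jk ∈ s, den jk := by rw [hεsq, one_mul]
    _ = ∏ jk ∈ s, h jk / den jk := (Finset.prod_div_distrib _ _).symm
    _ = ∏ jk ∈ s, (if P⁻¹ jk.2 < P⁻¹ jk.1 then
            (v jk.1 - v jk.2 - 2 * Complex.I) / (v jk.1 - v jk.2 + 2 * Complex.I)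
          else 1) := by
        refine Finset.prod_congr rfl fun jk hjk => ?_
        show (if P⁻¹ jk.2 < P⁻¹ jk.1 then v jk.1 - v jk.2 - 2 * Complex.I else den jk) / den jk
          = _
        by_cases hc : P⁻¹ jk.2 < P⁻¹ jk.1
        · rw [if_pos hc, if_pos hc]
        · rw [if_neg hc, if_neg hc]
          exact div_self (hdenne jk hjk)
end

section
/- Let R, K ∈ ℕ, let P be a permutation of {1,…,R+K}, let v₁,…,v_R ∈ ℂ satisfy v_j − v_k + 2i ≠ 0 for all 1 ≤ j < k ≤ R, and let δ₁,…,δ_K ∈ ℂ satisfy δ_j − δ_k + 2i ≠ 0 for all 1 ≤ j < k ≤ K. For Λ ∈ ℝ define the (R+K)-tuple w(Λ) by w_j(Λ) = v_j for 1 ≤ j ≤ R and w_{R+j}(Λ) = Λ + δ_j for 1 ≤ j ≤ K. Then, as Λ → +∞ along the reals, A_{R+K}(P)[w(Λ)] converges to A_R(P_R)[v₁,…,v_R] · A_K(P_K)[δ₁,…,δ_K], where P_R and P_K are the induced permutations of {1,…,R} and {1,…,K}. -/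
open Finset

section Helpers

open Filter Topology

private lemma sign_eq_signAux' {n : ℕ} (f : Equiv.Perm (Fin n)) :
    Equiv.Perm.sign f = Equiv.Perm.signAux f := by
  match n with
  | 0 =>
    have : f = 1 := Subsingleton.elim f 1
    simp [this, Equiv.Perm.signAux_one]
  | 1 =>
    have : f = 1 := Subsingleton.elim f 1
    simp [this, Equiv.Perm.signAux_one]
  | (n+2) =>
    have hs : Function.Surjective (MonoidHom.mk' Equiv.Perm.signAux Equiv.Perm.signAux_mul :
        Equiv.Perm (Fin (n+2)) →* ℤˣ) := by
      intro u
      rcases Int.units_eq_one_or u with h | h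
      · exact ⟨1, by simp [h, Equiv.Perm.signAux_one]⟩
      · exact ⟨Equiv.swap 0 1, by
          rw [MonoidHom.mk'_apply, Equiv.Perm.signAux_swap (x := (0 : Fin (n+2))) (y := 1)
            Fin.zero_ne_one, h]⟩
    have := Equiv.Perm.eq_sign_of_surjective_hom hs
    rw [← this]
    rfl

private lemma sign_eq_prod_pairs {M : ℕ} (P : Equiv.Perm (Fin M)) :
    ((Equiv.Perm.sign P : ℤ) : ℂ) =
      ∏ jk ∈ univ.filter (fun jk : Fin M × Fin M => jk.1 < jk.2),
        (if P jk.1 < P jk.2 then (1:ℂ) else -1) := by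
  rw [sign_eq_signAux']
  have h1 : ((Equiv.Perm.signAux P : ℤ)) = ∏ x ∈ Equiv.Perm.finPairsLT M,
      ((if P x.1 ≤ P x.2 then (-1:ℤˣ) else 1 : ℤˣ) : ℤ) :=
    map_prod (Units.coeHom ℤ) _ _
  rw [h1, Int.cast_prod]
  refine Finset.prod_nbij' (fun x => (x.2, x.1)) (fun jk => ⟨jk.2, jk.1⟩) ?_ ?_ ?_ ?_ ?_
  · intro x hx
    simp only [mem_filter, mem_univ, true_and]
    exact Equiv.Perm.mem_finPairsLT.1 hx
  · intro jk hjk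
    simp only [mem_filter, mem_univ, true_and] at hjk
    exact Equiv.Perm.mem_finPairsLT.2 hjk
  · intro x _; rfl
  · intro x _; rfl
  · intro x hx
    have hlt := Equiv.Perm.mem_finPairsLT.1 hx
    dsimp only
    rcases lt_or_ge (P x.2) (P x.1) with h | h
    · rw [if_neg (not_le.2 h), if_pos h]; simp
    · rw [if_pos h, if_neg (not_lt.2 h)]; simp

private lemma tendsto_ratio (c₁ c₂ : ℂ) :
    Tendsto (fun Λ : ℝ => (c₁ - Λ) / (c₂ - Λ)) atTop (𝓝 1) := by
  have h0 : Tendsto (fun Λ : ℝ => ‖c₂ - (Λ:ℂ)‖) atTop atTop := by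
    apply tendsto_atTop_mono (f := fun Λ : ℝ => Λ - ‖c₂‖)
    · intro Λ
      calc Λ - ‖c₂‖ ≤ ‖(Λ:ℂ)‖ - ‖c₂‖ := by
            simp [Complex.norm_real]
            exact le_abs_self Λ
        _ ≤ ‖c₂ - (Λ:ℂ)‖ := by
            have := norm_sub_norm_le ((Λ:ℂ)) c₂
            rw [norm_sub_rev] at this
            linarith
    · exact tendsto_atTop_add_const_right _ _ tendsto_id
  have hinv : Tendsto (fun Λ : ℝ => (c₂ - (Λ:ℂ))⁻¹) atTop (𝓝 0) := by
    rw [tendsto_zero_iff_norm_tendsto_zero]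
    simpa [norm_inv, Function.comp_def] using (tendsto_inv_atTop_zero.comp h0)
  have h1 : Tendsto (fun Λ : ℝ => 1 + (c₁ - c₂) * (c₂ - (Λ:ℂ))⁻¹) atTop (𝓝 1) := by
    have := (hinv.const_mul (c₁ - c₂)).const_add 1
    simpa using this
  apply h1.congr'
  have : ∀ᶠ Λ : ℝ in atTop, Λ > ‖c₂‖ := eventually_gt_atTop _
  filter_upwards [this] with Λ hΛ
  have hne : c₂ - (Λ:ℂ) ≠ 0 := by
    intro h
    have : c₂ = (Λ:ℂ) := by linear_combination h
    rw [this] at hΛ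
    simp [Complex.norm_real] at hΛ
    cases abs_cases Λ <;> linarith
  field_simp
  ring

end Helpers

private lemma betheAmp_eq_prod {M : ℕ} (w : Fin M → ℂ) (P : Equiv.Perm (Fin M))
    (hw : ∀ j k : Fin M, j < k → w j - w k + 2 * Complex.I ≠ 0) :
    betheAmp M w P = ∏ jk ∈ univ.filter (fun jk : Fin M × Fin M => jk.1 < jk.2),
      (if P⁻¹ jk.1 < P⁻¹ jk.2 then (1:ℂ)
       else (w jk.1 - w jk.2 - 2*Complex.I) / (w jk.1 - w jk.2 + 2*Complex.I)) := by
  unfold betheAmp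
  rw [sign_eq_prod_pairs]
  set S := univ.filter (fun jk : Fin M × Fin M => jk.1 < jk.2) with hS
  have key : (∏ jk ∈ S, ((if P jk.1 < P jk.2 then (1:ℂ) else -1) *
        (w (P jk.1) - w (P jk.2) + 2*Complex.I)))
      = ∏ jk ∈ S, (if P⁻¹ jk.1 < P⁻¹ jk.2 then (w jk.1 - w jk.2 + 2*Complex.I)
          else (w jk.1 - w jk.2 - 2*Complex.I)) := by
    refine Finset.prod_nbij'
      (fun jk => if P jk.1 < P jk.2 then (P jk.1, P jk.2) else (P jk.2, P jk.1))
      (fun xy => if P⁻¹ xy.1 < P⁻¹ xy.2 then (P⁻¹ xy.1, P⁻¹ xy.2) else (P⁻¹ xy.2, P⁻¹ xy.1))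
      ?_ ?_ ?_ ?_ ?_
    · intro jk hjk
      simp only [hS, mem_filter, mem_univ, true_and] at hjk ⊢
      by_cases h : P jk.1 < P jk.2
      · simpa [h] using h
      · have hne : P jk.1 ≠ P jk.2 := fun he => absurd (P.injective he) (ne_of_lt hjk)
        have h2 : P jk.2 < P jk.1 := lt_of_le_of_ne (not_lt.1 h) hne.symm
        simpa [h] using h2
    · intro xy hxy
      simp only [hS, mem_filter, mem_univ, true_and] at hxy ⊢
      by_cases h : P⁻¹ xy.1 < P⁻¹ xy.2
      · rw [if_pos h]; exact h
      · have hne : P⁻¹ xy.1 ≠ P⁻¹ xy.2 := fun he => absurd (P⁻¹.injective he) (ne_of_lt hxy)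
        have h2 : P⁻¹ xy.2 < P⁻¹ xy.1 := lt_of_le_of_ne (not_lt.1 h) hne.symm
        rw [if_neg h]; exact h2
    · intro jk hjk
      simp only [hS, mem_filter, mem_univ, true_and] at hjk
      by_cases h : P jk.1 < P jk.2
      · simp [h, hjk]
      · have hne : P jk.1 ≠ P jk.2 := fun he => absurd (P.injective he) (ne_of_lt hjk)
        have h2 : P jk.2 < P jk.1 := lt_of_le_of_ne (not_lt.1 h) hne.symm
        simp [h, not_lt.2 hjk.le, not_lt_of_gt hjk]
    · intro xy hxy
      simp only [hS, mem_filter, mem_univ, true_and] at hxy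
      by_cases h : P⁻¹ xy.1 < P⁻¹ xy.2
      · rw [if_pos h]; simp [h, hxy]
      · have hne : P⁻¹ xy.1 ≠ P⁻¹ xy.2 := fun he => absurd (P⁻¹.injective he) (ne_of_lt hxy)
        have h2 : P⁻¹ xy.2 < P⁻¹ xy.1 := lt_of_le_of_ne (not_lt.1 h) hne.symm
        rw [if_neg h]; simp [h, h2, not_lt_of_gt hxy, not_lt.2 hxy.le]
    · intro jk hjk
      simp only [hS, mem_filter, mem_univ, true_and] at hjk
      by_cases h : P jk.1 < P jk.2
      · simp only [h, if_pos, if_true]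
        simp [hjk]
      · have hne : P jk.1 ≠ P jk.2 := fun he => absurd (P.injective he) (ne_of_lt hjk)
        simp only [h, if_false, if_neg]
        simp only [Equiv.Perm.inv_def, Equiv.symm_apply_apply, if_neg (not_lt_of_gt hjk)]
        ring
  calc ((∏ jk ∈ S, (if P jk.1 < P jk.2 then (1:ℂ) else -1)) *
        ∏ jk ∈ S, (w (P jk.1) - w (P jk.2) + 2 * Complex.I) / (w jk.1 - w jk.2 + 2 * Complex.I))
      = (∏ jk ∈ S, ((if P jk.1 < P jk.2 then (1:ℂ) else -1) *
          (w (P jk.1) - w (P jk.2) + 2*Complex.I))) / ∏ jk ∈ S, (w jk.1 - w jk.2 + 2*Complex.I) := by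
        rw [Finset.prod_div_distrib, Finset.prod_mul_distrib]
        ring
    _ = ∏ jk ∈ S, ((if P⁻¹ jk.1 < P⁻¹ jk.2 then (w jk.1 - w jk.2 + 2*Complex.I)
          else (w jk.1 - w jk.2 - 2*Complex.I)) / (w jk.1 - w jk.2 + 2*Complex.I)) := by
        rw [key, Finset.prod_div_distrib]
    _ = _ := by
        refine Finset.prod_congr rfl ?_
        intro jk hjk
        simp only [hS, mem_filter, mem_univ, true_and] at hjk
        by_cases h : P⁻¹ jk.1 < P⁻¹ jk.2
        · rw [if_pos h, if_pos h, div_self (hw jk.1 jk.2 hjk)]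
        · rw [if_neg h, if_neg h]

/-- As `Λ → +∞` along the reals, the Bethe amplitude of the tuple
`(v₁,…,v_R, Λ+δ₁,…,Λ+δ_K)` for a permutation `P` of `{1,…,R+K}` converges to
`A_R(P_R)[v₁,…,v_R] · A_K(P_K)[δ₁,…,δ_K]`, where `P_R` and `P_K` are the induced
permutations of `{1,…,R}` and `{1,…,K}` (via the increasing enumerations `a`, `b` of
`P⁻¹({1,…,R})` and `P⁻¹({R+1,…,R+K})`). -/
theorem betheAmp_limit (R K : ℕ) (P : Equiv.Perm (Fin (R + K)))
    (v : Fin R → ℂ) (δ : Fin K → ℂ)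
    (hv : ∀ j k : Fin R, j < k → v j - v k + 2 * Complex.I ≠ 0)
    (hδ : ∀ j k : Fin K, j < k → δ j - δ k + 2 * Complex.I ≠ 0)
    (PR : Equiv.Perm (Fin R)) (a : Fin R → Fin (R + K))
    (ha : StrictMono a)
    (haRange : ∀ x : Fin (R + K), ((P x : Fin (R + K)) : ℕ) < R ↔ ∃ m : Fin R, a m = x)
    (hPR : ∀ m : Fin R, P (a m) = Fin.castAdd K (PR m))
    (PK : Equiv.Perm (Fin K)) (b : Fin K → Fin (R + K))
    (hb : StrictMono b)
    (hbRange : ∀ x : Fin (R + K), R ≤ ((P x : Fin (R + K)) : ℕ) ↔ ∃ m : Fin K, b m = x)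
    (hPK : ∀ m : Fin K, P (b m) = Fin.natAdd R (PK m)) :
    Filter.Tendsto
      (fun Λ : ℝ => betheAmp (R + K)
        (Fin.addCases (motive := fun _ => ℂ) v (fun j => (Λ : ℂ) + δ j)) P)
      Filter.atTop
      (nhds (betheAmp R v PR * betheAmp K δ PK)) := by
  classical
  set W : ℝ → Fin (R+K) → ℂ := fun Λ => Fin.addCases (motive := fun _ => ℂ) v (fun j => (Λ : ℂ) + δ j)
    with hW
  set u : Fin (R+K) → ℂ := Fin.addCases (motive := fun _ => ℂ) v δ with hu
  set S : Finset (Fin (R+K) × Fin (R+K)) := univ.filter (fun jk : Fin (R+K) × Fin (R+K) => jk.1 < jk.2) with hSdef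
  -- evaluation of W
  have hWlt : ∀ (Λ : ℝ) (x : Fin (R+K)) (hx : (x:ℕ) < R), W Λ x = v ⟨x, hx⟩ := by
    intro Λ x hx
    have hxe : x = Fin.castAdd K ⟨x, hx⟩ := by
      apply Fin.ext; rfl
    conv_lhs => rw [hxe]
    exact Fin.addCases_left _
  have hWge : ∀ (Λ : ℝ) (x : Fin (R+K)) (hx : R ≤ (x:ℕ)), W Λ x = (Λ:ℂ) + δ ⟨(x:ℕ) - R, by omega⟩ := by
    intro Λ x hx
    have hxe : x = Fin.natAdd R ⟨(x:ℕ) - R, by omega⟩ := by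
      apply Fin.ext; simp; omega
    conv_lhs => rw [hxe]
    exact Fin.addCases_right _
  have hult : ∀ (x : Fin (R+K)) (hx : (x:ℕ) < R), u x = v ⟨x, hx⟩ := by
    intro x hx
    have hxe : x = Fin.castAdd K ⟨x, hx⟩ := by apply Fin.ext; rfl
    conv_lhs => rw [hxe]
    exact Fin.addCases_left _
  have huge : ∀ (x : Fin (R+K)) (hx : R ≤ (x:ℕ)), u x = δ ⟨(x:ℕ) - R, by omega⟩ := by
    intro x hx
    have hxe : x = Fin.natAdd R ⟨(x:ℕ) - R, by omega⟩ := by apply Fin.ext; simp; omega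
    conv_lhs => rw [hxe]
    exact Fin.addCases_right _
  -- inverse permutation facts
  have hPinvV : ∀ x : Fin R, P⁻¹ (Fin.castAdd K x) = a (PR⁻¹ x) := by
    intro x
    have h1 := hPR (PR⁻¹ x)
    simp only [Equiv.Perm.inv_def, Equiv.apply_symm_apply] at h1
    rw [← h1]; simp [Equiv.Perm.inv_def]
  have hPinvD : ∀ x : Fin K, P⁻¹ (Fin.natAdd R x) = b (PK⁻¹ x) := by
    intro x
    have h1 := hPK (PK⁻¹ x)
    simp only [Equiv.Perm.inv_def, Equiv.apply_symm_apply] at h1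
    rw [← h1]; simp [Equiv.Perm.inv_def]
  -- the limit factors
  set L : Fin (R+K) × Fin (R+K) → ℂ := fun jk =>
    if P⁻¹ jk.1 < P⁻¹ jk.2 ∨ ¬(((jk.1 : ℕ) < R) ↔ ((jk.2 : ℕ) < R)) then 1
    else (u jk.1 - u jk.2 - 2*Complex.I) / (u jk.1 - u jk.2 + 2*Complex.I) with hL
  set F : ℝ → Fin (R+K) × Fin (R+K) → ℂ := fun Λ jk =>
    if P⁻¹ jk.1 < P⁻¹ jk.2 then (1:ℂ)
    else (W Λ jk.1 - W Λ jk.2 - 2*Complex.I) / (W Λ jk.1 - W Λ jk.2 + 2*Complex.I) with hF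
  -- Step B : tendsto of each factor
  have hfac : ∀ jk ∈ S, Filter.Tendsto (fun Λ : ℝ => F Λ jk) Filter.atTop (nhds (L jk)) := by
    intro jk hjk
    have hjk' : jk.1 < jk.2 := by
      rw [hSdef] at hjk
      exact (mem_filter.1 hjk).2
    have hjkv : (jk.1:ℕ) < (jk.2:ℕ) := hjk'
    by_cases hc : P⁻¹ jk.1 < P⁻¹ jk.2
    · have e2 : L jk = 1 := by
        simp only [hL]
        rw [if_pos (Or.inl hc)]
      rw [e2]
      refine tendsto_const_nhds.congr fun Λ => ?_
      simp only [hF]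
      rw [if_pos hc]
    · rcases lt_or_ge (jk.1:ℕ) R with h1 | h1
      · rcases lt_or_ge (jk.2:ℕ) R with h2 | h2
        · -- both in the v sector
          have e2 : L jk = (v ⟨jk.1, h1⟩ - v ⟨jk.2, h2⟩ - 2*Complex.I) /
              (v ⟨jk.1, h1⟩ - v ⟨jk.2, h2⟩ + 2*Complex.I) := by
            simp only [hL]
            rw [if_neg (not_or.2 ⟨hc, not_not_intro (iff_of_true h1 h2)⟩),
              hult _ h1, hult _ h2]
          rw [e2]
          refine tendsto_const_nhds.congr fun Λ => ?_
          simp only [hF]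
          rw [if_neg hc, hWlt Λ _ h1, hWlt Λ _ h2]
        · -- mixed pair : limit 1
          have e2 : L jk = 1 := by
            simp only [hL]
            refine if_pos (Or.inr ?_)
            intro hiff
            exact absurd (hiff.1 h1) (not_lt.2 h2)
          rw [e2]
          refine (tendsto_ratio (v ⟨jk.1, h1⟩ - δ ⟨(jk.2:ℕ) - R, by omega⟩ - 2*Complex.I)
            (v ⟨jk.1, h1⟩ - δ ⟨(jk.2:ℕ) - R, by omega⟩ + 2*Complex.I)).congr fun Λ => ?_
          simp only [hF]
          rw [if_neg hc, hWlt Λ _ h1, hWge Λ _ h2]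
          congr 1 <;> ring
      · -- both in the δ sector
        have h2 : R ≤ (jk.2:ℕ) := le_trans h1 hjkv.le
        have e2 : L jk = (δ ⟨(jk.1:ℕ) - R, by omega⟩ - δ ⟨(jk.2:ℕ) - R, by omega⟩ - 2*Complex.I) /
            (δ ⟨(jk.1:ℕ) - R, by omega⟩ - δ ⟨(jk.2:ℕ) - R, by omega⟩ + 2*Complex.I) := by
          simp only [hL]
          rw [if_neg (not_or.2 ⟨hc, not_not_intro (iff_of_false (not_lt.2 h1) (not_lt.2 h2))⟩),
            huge _ h1, huge _ h2]
        rw [e2]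
        refine tendsto_const_nhds.congr fun Λ => ?_
        simp only [hF]
        rw [if_neg hc, hWge Λ _ h1, hWge Λ _ h2]
        congr 1 <;> ring
  have hmain : Filter.Tendsto (fun Λ : ℝ => ∏ jk ∈ S, F Λ jk) Filter.atTop
      (nhds (∏ jk ∈ S, L jk)) := tendsto_finset_prod S hfac
  -- Step C : identify the limit
  have hprod : ∏ jk ∈ S, L jk = betheAmp R v PR * betheAmp K δ PK := by
    rw [betheAmp_eq_prod v PR hv, betheAmp_eq_prod δ PK hδ]
    have split1 := (Finset.prod_filter_mul_prod_filter_not S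
      (fun jk : Fin (R+K) × Fin (R+K) => (jk.1:ℕ) < R ∧ (jk.2:ℕ) < R) L).symm
    have split2 := (Finset.prod_filter_mul_prod_filter_not
      (S.filter (fun jk : Fin (R+K) × Fin (R+K) => ¬((jk.1:ℕ) < R ∧ (jk.2:ℕ) < R)))
      (fun jk : Fin (R+K) × Fin (R+K) => R ≤ (jk.1:ℕ) ∧ R ≤ (jk.2:ℕ)) L).symm
    have hmix : ∏ jk ∈ ((S.filter (fun jk : Fin (R+K) × Fin (R+K) => ¬((jk.1:ℕ) < R ∧ (jk.2:ℕ) < R))).filter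
        (fun jk : Fin (R+K) × Fin (R+K) => ¬(R ≤ (jk.1:ℕ) ∧ R ≤ (jk.2:ℕ)))), L jk = 1 := by
      refine Finset.prod_eq_one fun jk hjk => ?_
      simp only [Finset.mem_filter, hSdef, Finset.mem_univ, true_and] at hjk
      obtain ⟨⟨hlt, hq1⟩, hq2⟩ := hjk
      have hltv : (jk.1:ℕ) < (jk.2:ℕ) := hlt
      have h1 : (jk.1:ℕ) < R := by omega
      have h2 : R ≤ (jk.2:ℕ) := by omega
      simp only [hL]
      refine if_pos (Or.inr ?_)
      intro hiff
      exact absurd (hiff.1 h1) (not_lt.2 h2)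
    have hq12 : (S.filter (fun jk : Fin (R+K) × Fin (R+K) => ¬((jk.1:ℕ) < R ∧ (jk.2:ℕ) < R))).filter
        (fun jk : Fin (R+K) × Fin (R+K) => R ≤ (jk.1:ℕ) ∧ R ≤ (jk.2:ℕ))
        = S.filter (fun jk : Fin (R+K) × Fin (R+K) => R ≤ (jk.1:ℕ) ∧ R ≤ (jk.2:ℕ)) := by
      ext jk
      simp only [Finset.mem_filter]
      constructor
      · rintro ⟨⟨hs, -⟩, hq⟩
        exact ⟨hs, hq⟩
      · rintro ⟨hs, hq⟩
        exact ⟨⟨hs, fun hq1 => absurd hq.1 (not_le.2 hq1.1)⟩, hq⟩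
    have hR : ∏ jk ∈ S.filter (fun jk : Fin (R+K) × Fin (R+K) => (jk.1:ℕ) < R ∧ (jk.2:ℕ) < R), L jk
        = ∏ xy ∈ univ.filter (fun xy : Fin R × Fin R => xy.1 < xy.2),
          (if PR⁻¹ xy.1 < PR⁻¹ xy.2 then (1:ℂ)
           else (v xy.1 - v xy.2 - 2*Complex.I) / (v xy.1 - v xy.2 + 2*Complex.I)) := by
      refine (Finset.prod_bij
        (fun (xy : Fin R × Fin R) (_ : xy ∈ univ.filter (fun xy : Fin R × Fin R => xy.1 < xy.2)) =>
          ((Fin.castAdd K xy.1, Fin.castAdd K xy.2) : Fin (R+K) × Fin (R+K)))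
        ?_ ?_ ?_ ?_).symm
      · intro xy hxy
        simp only [Finset.mem_filter, Finset.mem_univ, true_and] at hxy
        simp only [Finset.mem_filter, hSdef, Finset.mem_univ, true_and, Fin.coe_castAdd]
        exact ⟨hxy, xy.1.isLt, xy.2.isLt⟩
      · intro a1 h1 a2 h2 he
        simp only [Prod.ext_iff, Fin.ext_iff, Fin.coe_castAdd] at he ⊢
        exact he
      · intro c hc
        simp only [Finset.mem_filter, hSdef, Finset.mem_univ, true_and] at hc
        obtain ⟨hlt, hc1, hc2⟩ := hc
        refine ⟨(⟨(c.1:ℕ), hc1⟩, ⟨(c.2:ℕ), hc2⟩), ?_, ?_⟩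
        · simp only [Finset.mem_filter, Finset.mem_univ, true_and, Fin.mk_lt_mk]
          exact hlt
        · exact Prod.ext_iff.mpr ⟨Fin.ext rfl, Fin.ext rfl⟩
      · intro xy hxy
        have hcond : (P⁻¹ (Fin.castAdd K xy.1) < P⁻¹ (Fin.castAdd K xy.2)) ↔
            (PR⁻¹ xy.1 < PR⁻¹ xy.2) := by
          rw [hPinvV, hPinvV]
          exact ha.lt_iff_lt
        have hu1 : u (Fin.castAdd K xy.1) = v xy.1 := by
          rw [hult _ (by simpa using xy.1.isLt)]
          congr 1
        have hu2 : u (Fin.castAdd K xy.2) = v xy.2 := by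
          rw [hult _ (by simpa using xy.2.isLt)]
          congr 1
        have hiff : ((Fin.castAdd K xy.1 : ℕ) < R ↔ (Fin.castAdd K xy.2 : ℕ) < R) :=
          iff_of_true (by simpa using xy.1.isLt) (by simpa using xy.2.isLt)
        simp only [hL]
        by_cases hc : PR⁻¹ xy.1 < PR⁻¹ xy.2
        · rw [if_pos hc, if_pos (Or.inl (hcond.2 hc))]
        · rw [if_neg hc, if_neg (not_or.2 ⟨fun h => hc (hcond.1 h), not_not_intro hiff⟩),
            hu1, hu2]
    have hK : ∏ jk ∈ S.filter (fun jk : Fin (R+K) × Fin (R+K) => R ≤ (jk.1:ℕ) ∧ R ≤ (jk.2:ℕ)), L jk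
        = ∏ xy ∈ univ.filter (fun xy : Fin K × Fin K => xy.1 < xy.2),
          (if PK⁻¹ xy.1 < PK⁻¹ xy.2 then (1:ℂ)
           else (δ xy.1 - δ xy.2 - 2*Complex.I) / (δ xy.1 - δ xy.2 + 2*Complex.I)) := by
      refine (Finset.prod_bij
        (fun (xy : Fin K × Fin K) (_ : xy ∈ univ.filter (fun xy : Fin K × Fin K => xy.1 < xy.2)) =>
          ((Fin.natAdd R xy.1, Fin.natAdd R xy.2) : Fin (R+K) × Fin (R+K)))
        ?_ ?_ ?_ ?_).symm
      · intro xy hxy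
        simp only [Finset.mem_filter, Finset.mem_univ, true_and] at hxy
        simp only [Finset.mem_filter, hSdef, Finset.mem_univ, true_and, Fin.coe_natAdd]
        refine ⟨?_, Nat.le_add_right _ _, Nat.le_add_right _ _⟩
        simp only [Fin.lt_def, Fin.coe_natAdd]
        exact Nat.add_lt_add_left hxy _
      · intro a1 h1 a2 h2 he
        simp only [Prod.ext_iff, Fin.ext_iff, Fin.coe_natAdd] at he ⊢
        omega
      · intro c hc
        simp only [Finset.mem_filter, hSdef, Finset.mem_univ, true_and] at hc
        obtain ⟨hlt, hc1, hc2⟩ := hc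
        have hltv : (c.1:ℕ) < (c.2:ℕ) := hlt
        refine ⟨(⟨(c.1:ℕ) - R, by omega⟩, ⟨(c.2:ℕ) - R, by omega⟩), ?_, ?_⟩
        · simp only [Finset.mem_filter, Finset.mem_univ, true_and, Fin.mk_lt_mk]
          omega
        · simp only [Prod.ext_iff, Fin.ext_iff, Fin.coe_natAdd]
          omega
      · intro xy hxy
        have hcond : (P⁻¹ (Fin.natAdd R xy.1) < P⁻¹ (Fin.natAdd R xy.2)) ↔
            (PK⁻¹ xy.1 < PK⁻¹ xy.2) := by
          rw [hPinvD, hPinvD]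
          exact hb.lt_iff_lt
        have hu1 : u (Fin.natAdd R xy.1) = δ xy.1 := by
          rw [huge _ (by simp)]
          congr 1
          apply Fin.ext
          simp
        have hu2 : u (Fin.natAdd R xy.2) = δ xy.2 := by
          rw [huge _ (by simp)]
          congr 1
          apply Fin.ext
          simp
        have hiff : ((Fin.natAdd R xy.1 : ℕ) < R ↔ (Fin.natAdd R xy.2 : ℕ) < R) :=
          iff_of_false (by simp) (by simp)
        simp only [hL]
        by_cases hc : PK⁻¹ xy.1 < PK⁻¹ xy.2
        · rw [if_pos hc, if_pos (Or.inl (hcond.2 hc))]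
        · rw [if_neg hc, if_neg (not_or.2 ⟨fun h => hc (hcond.1 h), not_not_intro hiff⟩),
            hu1, hu2]
    rw [split1, split2, hmix, hq12, hR, hK, mul_one]
  rw [← hprod]
  refine hmain.congr' ?_
  -- Step A : eventual equality
  have hev : ∀ᶠ Λ : ℝ in Filter.atTop, ∀ (i : Fin R) (j : Fin K),
      (Λ:ℂ) ≠ v i - δ j + 2*Complex.I := by
    refine Filter.eventually_all.2 fun i => Filter.eventually_all.2 fun j => ?_
    filter_upwards [Filter.eventually_gt_atTop ((v i - δ j + 2*Complex.I).re)] with Λ hΛ h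
    have : Λ = (v i - δ j + 2*Complex.I).re := by
      rw [← h, Complex.ofReal_re]
    linarith
  filter_upwards [hev] with Λ hΛ
  have hw : ∀ j k : Fin (R+K), j < k → W Λ j - W Λ k + 2*Complex.I ≠ 0 := by
    intro j k hjk
    have hjkv : (j:ℕ) < (k:ℕ) := hjk
    rcases lt_or_ge (j:ℕ) R with hj | hj
    · rcases lt_or_ge (k:ℕ) R with hk | hk
      · rw [hWlt Λ j hj, hWlt Λ k hk]
        exact hv _ _ (by simpa [Fin.mk_lt_mk] using hjkv)
      · rw [hWlt Λ j hj, hWge Λ k hk]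
        intro h0
        exact hΛ ⟨j, hj⟩ ⟨(k:ℕ) - R, by omega⟩ (by linear_combination -h0)
    · have hk : R ≤ (k:ℕ) := le_trans hj (le_of_lt hjkv)
      rw [hWge Λ j hj, hWge Λ k hk]
      intro h0
      refine hδ ⟨(j:ℕ) - R, by omega⟩ ⟨(k:ℕ) - R, by omega⟩ (by simp [Fin.mk_lt_mk]; omega) ?_
      linear_combination h0
  exact (betheAmp_eq_prod (W Λ) P hw).symm
end

section
/- Let L, R, K ∈ ℕ with R + K ≤ L. Let v₁,…,v_R ∈ ℂ satisfy v_j ≠ ±i for all j, v_j − v_k + 2i ≠ 0 and v_j − v_k − 2i ≠ 0 for all j ≠ k, and the Bethe ansatz equations ((v_j+i)/(v_j−i))^L = ∏_{ℓ≠j} (v_j − v_ℓ + 2i)/(v_j − v_ℓ − 2i) for j = 1,…,R. Let δ₁,…,δ_K ∈ ℂ satisfy δ_j − δ_k + 2i ≠ 0 for all 1 ≤ j < k ≤ K, and set C_K = Σ_{Q ∈ S_K} A_K(Q)[δ₁,…,δ_K]. Then for every S ⊆ Fin L, as Λ → +∞ along the reals, the coefficient G_{R+K}[v₁,…,v_R,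 Λ+δ₁,…,Λ+δ_K](S) of the formal Bethe state (well-defined for all sufficiently large Λ) converges to C_K · (1/K!) · ((S⁻)^K G_R[v₁,…,v_R])(S); i.e., the limit of the formal Bethe state with K additional rapidities of center Λ sent to infinity is C_K times the non-regular descendant eigenstate (1/K!)(S⁻)^K applied to the regular Bethe state (Theorem III.1). -/
open Finset

/-- The coefficient function of the formal Bethe state with `M` rapidities `v` on a chain
of `L` sites: on a set `S` of down-spin positions with `|S| = M` it is the Bethe ansatz
wavefunction `f_M` evaluated at the increasing enumeration of the site labels (sites
labelled `1,…,L`), and `0` otherwise. -/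
noncomputable def betheState (L M : ℕ) (v : Fin M → ℂ) (S : Finset (Fin L)) : ℂ :=
  if h : S.card = M then
    ∑ P : Equiv.Perm (Fin M), betheAmp M v P *
      ∏ j : Fin M,
        ((v (P j) + Complex.I) / (v (P j) - Complex.I)) ^ (((S.orderIsoOfFin h j : Fin L) : ℕ) + 1)
  else 0

namespace T31

open Filter Equiv


noncomputable def llim (a b : ℂ) : ℂ := if a = 0 then b else a

noncomputable def mdeg (a : ℂ) : ℕ := if a = 0 then 0 else 1

lemma tendsto_inv_C : Tendsto (fun Λ : ℝ => ((Λ : ℂ))⁻¹) atTop (nhds 0) := by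
  have h := tendsto_inv_atTop_zero (𝕜 := ℝ)
  have h2 := (Complex.continuous_ofReal.tendsto 0).comp h
  refine h2.congr fun Λ => ?_
  simp

lemma div_div_div_same (a b c : ℂ) (hc : c ≠ 0) : (a / c) / (b / c) = a / b := by
  rcases eq_or_ne b 0 with hb | hb
  · simp [hb]
  · field_simp

lemma tendsto_affine (a b : ℂ) :
    Tendsto (fun Λ : ℝ => (a * Λ + b) / (Λ : ℂ) ^ (mdeg a)) atTop (nhds (llim a b)) := by
  rcases eq_or_ne a 0 with ha | ha
  · simp only [mdeg, ha, if_pos, llim, if_true, zero_mul, zero_add, pow_zero, div_one]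
    exact tendsto_const_nhds
  · simp only [mdeg, ha, if_neg, llim, if_false, pow_one]
    have key : Tendsto (fun Λ : ℝ => a + b * ((Λ:ℂ))⁻¹) atTop (nhds (a + b * 0)) :=
      tendsto_const_nhds.add (tendsto_const_nhds.mul tendsto_inv_C)
    rw [mul_zero, add_zero] at key
    refine key.congr' ?_
    filter_upwards [eventually_gt_atTop (0:ℝ)] with Λ hΛ
    have hΛ' : (Λ:ℂ) ≠ 0 := by simpa using ne_of_gt hΛ
    field_simp

lemma tendsto_frac (a b : ℂ) :
    Tendsto (fun Λ : ℝ => ((Λ : ℂ) + a) / ((Λ : ℂ) + b)) atTop (nhds 1) := by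
  have h1 := tendsto_affine 1 a
  have h2 := tendsto_affine 1 b
  simp only [mdeg, one_ne_zero, if_neg, llim, if_false, pow_one, one_mul] at h1 h2
  have h3 := h1.div h2 one_ne_zero
  rw [div_one] at h3
  refine h3.congr' ?_
  filter_upwards [eventually_gt_atTop (0:ℝ)] with Λ hΛ
  have hΛ' : (Λ:ℂ) ≠ 0 := by simpa using ne_of_gt hΛ
  simp only [Pi.div_apply]
  rw [div_div_div_same _ _ _ hΛ']

def pairs (n : ℕ) : Finset (Fin n × Fin n) :=
  univ.filter (fun jk : Fin n × Fin n => jk.1 < jk.2)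

lemma mem_pairs {n : ℕ} {p : Fin n × Fin n} : p ∈ pairs n ↔ p.1 < p.2 := by
  simp [pairs]

/-- product over pairs as double product over `Ioi`. -/
lemma prod_pairs_eq {M : Type*} [CommMonoid M] (n : ℕ) (g : Fin n → Fin n → M) :
    ∏ p ∈ pairs n, g p.1 p.2 = ∏ i : Fin n, ∏ j ∈ Ioi i, g i j := by
  rw [Finset.prod_sigma']
  refine Finset.prod_nbij' (fun p => ⟨p.1, p.2⟩) (fun q => (q.1, q.2)) ?_ ?_ ?_ ?_ ?_
  · intro p hp; simp only [mem_sigma, mem_univ, true_and, mem_Ioi]; exact mem_pairs.1 hp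
  · intro q hq; simp only [mem_sigma, mem_univ, true_and, mem_Ioi] at hq
    exact mem_pairs.2 hq
  · intro p _; rfl
  · intro q _; rfl
  · intro p _; rfl

/-- sum over pairs of a symmetric function is invariant under a permutation. -/
lemma sum_pairs_perm {n : ℕ} (P : Perm (Fin n)) (g : Fin n → Fin n → ℕ)
    (hg : ∀ a b, g a b = g b a) :
    ∑ p ∈ pairs n, g (P p.1) (P p.2) = ∑ p ∈ pairs n, g p.1 p.2 := by
  refine Finset.sum_nbij'
    (fun p => if P p.1 < P p.2 then (P p.1, P p.2) else (P p.2, P p.1))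
    (fun q => if P⁻¹ q.1 < P⁻¹ q.2 then (P⁻¹ q.1, P⁻¹ q.2) else (P⁻¹ q.2, P⁻¹ q.1))
    ?_ ?_ ?_ ?_ ?_
  · intro p hp
    have h1 : p.1 < p.2 := mem_pairs.1 hp
    have hne : P p.1 ≠ P p.2 := fun h => absurd (P.injective h) h1.ne
    rcases lt_or_gt_of_ne hne with h | h
    · simp [mem_pairs, if_pos h, h]
    · simp [mem_pairs, if_neg (not_lt.2 h.le), h]
  · intro q hq
    have h1 : q.1 < q.2 := mem_pairs.1 hq
    have hne : P⁻¹ q.1 ≠ P⁻¹ q.2 := fun h => absurd (P⁻¹.injective h) h1.ne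
    rcases lt_or_gt_of_ne hne with h | h
    · simp only [Perm.inv_def] at h
      simp [mem_pairs, if_pos h, h]
    · simp only [Perm.inv_def] at h
      simp [mem_pairs, if_neg (not_lt.2 h.le), h]
  · intro p hp
    have h1 : p.1 < p.2 := mem_pairs.1 hp
    have hne : P p.1 ≠ P p.2 := fun h => absurd (P.injective h) h1.ne
    rcases lt_or_gt_of_ne hne with h | h
    · simp [if_pos h, Equiv.symm_apply_apply, h1]
    · simp [if_neg (not_lt.2 h.le), Equiv.symm_apply_apply, h1.not_gt, h1]
  · intro q hq
    have h1 : q.1 < q.2 := mem_pairs.1 hq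
    have hne : P⁻¹ q.1 ≠ P⁻¹ q.2 := fun h => absurd (P⁻¹.injective h) h1.ne
    rcases lt_or_gt_of_ne hne with h | h
    · simp only [Perm.inv_def] at h
      simp [if_pos h, Equiv.apply_symm_apply, h1]
    · simp only [Perm.inv_def] at h
      simp [if_neg (not_lt.2 h.le), Equiv.apply_symm_apply, h1.not_gt, h1]
  · intro p hp
    rcases lt_or_gt_of_ne (fun h => absurd (P.injective h) (mem_pairs.1 hp).ne : P p.1 ≠ P p.2) with h | h
    · simp [if_pos h]
    · simp [if_neg (not_lt.2 h.le), hg]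

lemma sign_eq_inversions {n : ℕ} (π : Perm (Fin n)) :
    ((Equiv.Perm.sign π : ℤ) : ℝ)
      = (-1 : ℝ) ^ ((pairs n).filter (fun p => π p.2 < π p.1)).card := by
  set w : Fin n → ℝ := fun i => ((i : ℕ) : ℝ) with hw
  have hsub : (Matrix.vandermonde w).submatrix π id = Matrix.vandermonde (w ∘ π) := by
    ext i j; simp [Matrix.vandermonde, Matrix.submatrix]
  have hdet := Matrix.det_permute π (Matrix.vandermonde w)
  rw [hsub, Matrix.det_vandermonde, Matrix.det_vandermonde] at hdet
  simp only [Function.comp] at hdet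
  rw [← prod_pairs_eq n (fun i j => w (π j) - w (π i)),
      ← prod_pairs_eq n (fun i j => w j - w i)] at hdet
  -- factor the LHS into signs and positive parts
  have hfac : ∀ p ∈ pairs n, w (π p.2) - w (π p.1)
      = (if π p.2 < π p.1 then (-1:ℝ) else 1) * |w (π p.2) - w (π p.1)| := by
    intro p hp
    have hne : π p.1 ≠ π p.2 := fun h => absurd (π.injective h) (mem_pairs.1 hp).ne
    rcases lt_or_gt_of_ne hne with h | h
    · rw [if_neg (not_lt.2 h.le), one_mul, abs_of_pos]
      simp only [hw, sub_pos]
      exact_mod_cast h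
    · rw [if_pos h, neg_one_mul, abs_of_neg, neg_neg]
      simp only [hw, sub_neg]
      exact_mod_cast h
  rw [Finset.prod_congr rfl hfac, Finset.prod_mul_distrib, Finset.prod_ite,
    Finset.prod_const, Finset.prod_const_one, mul_one] at hdet
  set m := ((pairs n).filter (fun p => π p.2 < π p.1)).card
  set C := ∏ p ∈ pairs n, |w (π p.2) - w (π p.1)| with hC
  have hCpos : 0 < C := by
    refine Finset.prod_pos fun p hp => ?_
    have hne : π p.1 ≠ π p.2 := fun h => absurd (π.injective h) (mem_pairs.1 hp).ne
    have : w (π p.2) ≠ w (π p.1) := by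
      simp only [hw]; exact_mod_cast fun h => hne (Fin.ext (by exact_mod_cast h.symm))
    exact abs_pos.2 (sub_ne_zero.2 this)
  have hBpos : 0 < ∏ p ∈ pairs n, (w p.2 - w p.1) := by
    refine Finset.prod_pos fun p hp => ?_
    simp only [hw, sub_pos]
    exact_mod_cast (mem_pairs.1 hp)
  set B := ∏ p ∈ pairs n, (w p.2 - w p.1)
  -- hdet : (-1)^m * C = sign π * B
  rcases Int.units_eq_one_or (Equiv.Perm.sign π) with hs | hs <;>
    rcases Nat.even_or_odd m with hm | hm <;>
      simp only [hs, hm.neg_one_pow, Units.val_one, Int.cast_one, Units.val_neg,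
        Int.cast_neg, one_mul, neg_one_mul] at hdet ⊢ <;> nlinarith [hdet, hCpos, hBpos]
lemma card_mixed {n : ℕ} (J : Finset (Fin n)) :
    ((pairs n).filter (fun p => p.1 ∈ J ∧ p.2 ∉ J)).card
      + ((pairs n).filter (fun p => p.1 ∉ J ∧ p.2 ∈ J)).card = J.card * Jᶜ.card := by
  classical
  set A := (pairs n).filter (fun p => p.1 ∈ J ∧ p.2 ∉ J) with hA
  set B := (pairs n).filter (fun p => p.1 ∉ J ∧ p.2 ∈ J) with hB
  have hdisj : Disjoint A B := by
    refine Finset.disjoint_left.2 fun p hp hq => ?_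
    rw [hA, mem_filter] at hp; rw [hB, mem_filter] at hq
    exact hq.2.1 hp.2.1
  rw [← Finset.card_union_of_disjoint hdisj, ← Finset.card_product]
  refine (Finset.card_bij' (fun q _ => if q.1 < q.2 then q else (q.2, q.1))
    (fun p _ => if p.1 ∈ J then p else (p.2, p.1)) ?_ ?_ ?_ ?_).symm
  · intro q hq
    rw [Finset.mem_product] at hq
    have hne : q.1 ≠ q.2 := fun h => (mem_compl.1 hq.2) (h ▸ hq.1)
    rcases lt_or_gt_of_ne hne with h | h
    · rw [if_pos h]
      exact Finset.mem_union_left _ (by simp [hA, mem_pairs, h, hq.1, mem_compl.1 hq.2])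
    · rw [if_neg (not_lt.2 h.le)]
      exact Finset.mem_union_right _ (by simp [hB, mem_pairs, h, hq.1, mem_compl.1 hq.2])
  · intro p hp
    rcases Finset.mem_union.1 hp with h | h
    · rw [hA, mem_filter] at h
      rw [if_pos h.2.1]
      exact Finset.mem_product.2 ⟨h.2.1, mem_compl.2 h.2.2⟩
    · rw [hB, mem_filter] at h
      rw [if_neg h.2.1]
      exact Finset.mem_product.2 ⟨h.2.2, mem_compl.2 h.2.1⟩
  · intro q hq
    rw [Finset.mem_product] at hq
    have hne : q.1 ≠ q.2 := fun h => (mem_compl.1 hq.2) (h ▸ hq.1)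
    rcases lt_or_gt_of_ne hne with h | h
    · rw [if_pos h, if_pos hq.1]
    · rw [if_neg (not_lt.2 h.le)]
      simp only [if_neg (mem_compl.1 hq.2)]
  · intro p hp
    rcases Finset.mem_union.1 hp with h | h
    · rw [hA, mem_filter] at h
      rw [if_pos h.2.1, if_pos (mem_pairs.1 h.1)]
    · rw [hB, mem_filter] at h
      rw [if_neg h.2.1]
      simp only [if_neg (not_lt.2 (mem_pairs.1 h.1).le)]

/-- reindex a product over pairs within a block. -/
lemma prod_pairs_block {n k : ℕ} {M : Type*} [CommMonoid M] (c : Fin n → Prop)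
    [DecidablePred c] (h : Fin k → Fin n) (hmono : StrictMono h) (hmem : ∀ a, c (h a))
    (hsurj : ∀ j, c j → ∃ a, h a = j) (g : Fin n → Fin n → M) :
    ∏ p ∈ (pairs n).filter (fun p => c p.1 ∧ c p.2), g p.1 p.2
      = ∏ q ∈ pairs k, g (h q.1) (h q.2) := by
  refine (Finset.prod_bij (fun q (_ : q ∈ pairs k) => (h q.1, h q.2)) ?_ ?_ ?_ ?_).symm
  · intro q hq
    simp only [mem_filter, mem_pairs]
    exact ⟨hmono (mem_pairs.1 hq), hmem _, hmem _⟩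
  · intro q1 h1 q2 h2 heq
    have e1 : h q1.1 = h q2.1 := congrArg Prod.fst heq
    have e2 : h q1.2 = h q2.2 := congrArg Prod.snd heq
    exact Prod.ext (hmono.injective e1) (hmono.injective e2)
  · intro p hp
    rw [mem_filter] at hp
    obtain ⟨a, ha⟩ := hsurj p.1 hp.2.1
    obtain ⟨b, hb⟩ := hsurj p.2 hp.2.2
    have hab : a < b := by
      refine hmono.lt_iff_lt.1 ?_
      rw [ha, hb]; exact mem_pairs.1 hp.1
    exact ⟨(a, b), mem_pairs.2 hab, by dsimp only; rw [ha, hb]⟩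
  · intro q hq; rfl

/-- reindex a product over a block of indices. -/
lemma prod_block {n k : ℕ} {M : Type*} [CommMonoid M] (c : Fin n → Prop)
    [DecidablePred c] (h : Fin k → Fin n) (hinj : Function.Injective h) (hmem : ∀ a, c (h a))
    (hsurj : ∀ j, c j → ∃ a, h a = j) (g : Fin n → M) :
    ∏ j ∈ univ.filter c, g j = ∏ a : Fin k, g (h a) := by
  refine (Finset.prod_bij (fun a (_ : a ∈ univ) => h a) ?_ ?_ ?_ ?_).symm
  · intro a _; simp [hmem a]
  · intro a _ b _ heq; exact hinj heq
  · intro j hj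
    obtain ⟨a, ha⟩ := hsurj j (mem_filter.1 hj).2
    exact ⟨a, mem_univ a, ha⟩
  · intro a _; rfl

lemma lowerOp_iter (L : ℕ) (K : ℕ) (g : Finset (Fin L) → ℂ) (S : Finset (Fin L)) :
    (lowerOp L)^[K] g S = ∑ T ∈ S.powersetCard K, (K.factorial : ℂ) * g (S \ T) := by
  induction K generalizing g S with
  | zero => simp
  | succ K ih =>
    rw [Function.iterate_succ_apply, ih]
    have hstep : ∀ T ∈ S.powersetCard K, (lowerOp L) g (S \ T)
        = ∑ x ∈ S \ T, g (S \ insert x T) := by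
      intro T hT
      rw [lowerOp]
      refine Finset.sum_congr rfl fun x hx => ?_
      congr 1
      ext y
      simp only [mem_erase, Finset.mem_sdiff, mem_insert]
      tauto
    rw [Finset.sum_congr rfl (fun T hT => by rw [hstep T hT])]
    have key : ∑ T ∈ S.powersetCard K, ∑ x ∈ S \ T, g (S \ insert x T)
        = ∑ U ∈ S.powersetCard (K+1), ∑ _x ∈ U, g (S \ U) := by
      rw [Finset.sum_sigma', Finset.sum_sigma']
      refine Finset.sum_bij (fun p hp => ⟨insert p.snd p.fst, p.snd⟩) ?_ ?_ ?_ ?_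
      · rintro ⟨T, x⟩ hp
        simp only [mem_sigma, Finset.mem_powersetCard, Finset.mem_sdiff] at hp ⊢
        obtain ⟨⟨hTS, hTc⟩, hxS, hxT⟩ := hp
        refine ⟨⟨insert_subset hxS hTS, ?_⟩, mem_insert_self _ _⟩
        rw [card_insert_of_notMem hxT, hTc]
      · rintro ⟨T, x⟩ hp ⟨T', x'⟩ hp' heq
        simp only [mem_sigma, Finset.mem_powersetCard, Finset.mem_sdiff] at hp hp'
        obtain ⟨heq1, heq2⟩ := Sigma.mk.inj_iff.1 heq
        have hx : x = x' := by exact_mod_cast eq_of_heq heq2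
        subst hx
        have : T = T' := by
          have h1 : (insert x T).erase x = (insert x T').erase x := by rw [heq1]
          rwa [Finset.erase_insert hp.2.2, Finset.erase_insert hp'.2.2] at h1
        subst this; rfl
      · rintro ⟨U, x⟩ hU
        simp only [mem_sigma, Finset.mem_powersetCard] at hU
        obtain ⟨⟨hUS, hUc⟩, hxU⟩ := hU
        refine ⟨⟨U.erase x, x⟩, ?_, ?_⟩
        · simp only [mem_sigma, Finset.mem_powersetCard, Finset.mem_sdiff]
          refine ⟨⟨(erase_subset _ _).trans hUS, ?_⟩, hUS hxU, notMem_erase _ _⟩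
          rw [card_erase_of_mem hxU, hUc]; rfl
        · simp [Finset.insert_erase hxU]
      · rintro ⟨T, x⟩ hp; rfl
    rw [← Finset.mul_sum, key, Finset.mul_sum]
    refine Finset.sum_congr rfl fun U hU => ?_
    rw [Finset.sum_const, nsmul_eq_mul, (Finset.mem_powersetCard.1 hU).2]
    push_cast [Nat.factorial_succ]
    ring
noncomputable def cc (R K : ℕ) : Fin (R+K) → ℂ :=
  Fin.addCases (fun _ => 0) (fun _ => 1)
noncomputable def uu (R K : ℕ) (v : Fin R → ℂ) (δ : Fin K → ℂ) : Fin (R+K) → ℂ :=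
  Fin.addCases v δ
noncomputable def ee (z : ℂ) : ℂ := (z + Complex.I) / (z - Complex.I)
noncomputable def elim0 (R K : ℕ) (v : Fin R → ℂ) : Fin (R+K) → ℂ :=
  Fin.addCases (fun a => ee (v a)) (fun _ => 1)
noncomputable def nl (R K : ℕ) (v : Fin R → ℂ) (δ : Fin K → ℂ) (j k : Fin (R+K)) : ℂ :=
  llim (cc R K j - cc R K k) (uu R K v δ j - uu R K v δ k + 2 * Complex.I)

lemma cc_left (R K : ℕ) (a : Fin R) : cc R K (Fin.castAdd K a) = 0 := by
  simp [cc]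
lemma cc_right (R K : ℕ) (b : Fin K) : cc R K (Fin.natAdd R b) = 1 := by
  simp [cc]
lemma uu_left (R K v δ) (a : Fin R) : uu R K v δ (Fin.castAdd K a) = v a := by
  simp [uu]
lemma uu_right (R K v δ) (b : Fin K) : uu R K v δ (Fin.natAdd R b) = δ b := by
  simp [uu]
lemma elim0_left (R K v) (a : Fin R) : elim0 R K v (Fin.castAdd K a) = ee (v a) := by
  simp [elim0]
lemma elim0_right (R K v) (b : Fin K) : elim0 R K v (Fin.natAdd R b) = 1 := by
  simp [elim0]

lemma compl_card {R K : ℕ} {J : Finset (Fin (R+K))} (hJ : J.card = K) : Jᶜ.card = R := by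
  rw [Finset.card_compl, hJ, Fintype.card_fin, Nat.add_sub_cancel]

noncomputable def blockEquiv (R K : ℕ) (J : Finset (Fin (R+K))) (hJ : J.card = K) :
    (Fin R ⊕ Fin K) ≃ Fin (R+K) :=
  Equiv.ofBijective
    (Sum.elim (fun a => (Jᶜ.orderIsoOfFin (compl_card hJ) a : Fin (R+K)))
      (fun b => (J.orderIsoOfFin hJ b : Fin (R+K)))) (by
    rw [Fintype.bijective_iff_injective_and_card]
    constructor
    · rintro (a | a) (b | b) h <;> simp only [Sum.elim_inl, Sum.elim_inr] at h
      · rw [Sum.inl.injEq]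
        exact_mod_cast (Jᶜ.orderIsoOfFin (compl_card hJ)).injective (Subtype.ext h)
      · exfalso
        have h1 : (Jᶜ.orderIsoOfFin (compl_card hJ) a : Fin (R+K)) ∈ Jᶜ :=
          (Jᶜ.orderIsoOfFin (compl_card hJ) a).2
        have h2 : (J.orderIsoOfFin hJ b : Fin (R+K)) ∈ J := (J.orderIsoOfFin hJ b).2
        rw [h] at h1
        exact (Finset.mem_compl.1 h1) h2
      · exfalso
        have h1 : (Jᶜ.orderIsoOfFin (compl_card hJ) b : Fin (R+K)) ∈ Jᶜ :=
          (Jᶜ.orderIsoOfFin (compl_card hJ) b).2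
        have h2 : (J.orderIsoOfFin hJ a : Fin (R+K)) ∈ J := (J.orderIsoOfFin hJ a).2
        rw [← h] at h1
        exact (Finset.mem_compl.1 h1) h2
      · rw [Sum.inr.injEq]
        exact_mod_cast (J.orderIsoOfFin hJ).injective (Subtype.ext h)
    · simp)

noncomputable def psiP (R K : ℕ) (J : Finset (Fin (R+K))) (σ : Perm (Fin R))
    (τ : Perm (Fin K)) : Perm (Fin (R+K)) :=
  if h : J.card = K then
    ((blockEquiv R K J h).symm.trans (Equiv.sumCongr σ τ)).trans finSumFinEquiv
  else 1

lemma psiP_apply_left {R K : ℕ} {J : Finset (Fin (R+K))} (hJ : J.card = K)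
    (σ : Perm (Fin R)) (τ : Perm (Fin K)) (a : Fin R) :
    psiP R K J σ τ (Jᶜ.orderIsoOfFin (compl_card hJ) a : Fin (R+K))
      = Fin.castAdd K (σ a) := by
  rw [psiP, dif_pos hJ]
  have h1 : (blockEquiv R K J hJ).symm (Jᶜ.orderEmbOfFin (compl_card hJ) a)
      = Sum.inl a := by
    rw [Equiv.symm_apply_eq]; rfl
  simp [Equiv.trans_apply, h1]

lemma psiP_apply_right {R K : ℕ} {J : Finset (Fin (R+K))} (hJ : J.card = K)
    (σ : Perm (Fin R)) (τ : Perm (Fin K)) (b : Fin K) :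
    psiP R K J σ τ (J.orderIsoOfFin hJ b : Fin (R+K)) = Fin.natAdd R (τ b) := by
  rw [psiP, dif_pos hJ]
  have h1 : (blockEquiv R K J hJ).symm (J.orderEmbOfFin hJ b)
      = Sum.inr b := by
    rw [Equiv.symm_apply_eq]; rfl
  simp [Equiv.trans_apply, h1]

lemma exists_left {R K : ℕ} {J : Finset (Fin (R+K))} (hJ : J.card = K) {j : Fin (R+K)}
    (hj : j ∉ J) : ∃ a : Fin R, (Jᶜ.orderIsoOfFin (compl_card hJ) a : Fin (R+K)) = j :=
  ⟨(Jᶜ.orderIsoOfFin (compl_card hJ)).symm ⟨j, Finset.mem_compl.2 hj⟩, by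
    rw [OrderIso.apply_symm_apply]⟩

lemma exists_right {R K : ℕ} {J : Finset (Fin (R+K))} (hJ : J.card = K) {j : Fin (R+K)}
    (hj : j ∈ J) : ∃ b : Fin K, (J.orderIsoOfFin hJ b : Fin (R+K)) = j :=
  ⟨(J.orderIsoOfFin hJ).symm ⟨j, hj⟩, by rw [OrderIso.apply_symm_apply]⟩

lemma psiP_decomp {R K : ℕ} {J : Finset (Fin (R+K))} (hJ : J.card = K)
    (σ : Perm (Fin R)) (τ : Perm (Fin K)) :
    psiP R K J σ τ
      = (finSumFinEquiv.permCongr (Equiv.sumCongr σ τ)) * psiP R K J 1 1 := by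
  ext j
  simp only [psiP, dif_pos hJ, Equiv.Perm.mul_apply, Equiv.trans_apply,
    Equiv.permCongr_apply, Equiv.symm_apply_apply, Equiv.sumCongr_apply]
  rcases (blockEquiv R K J hJ).symm j with a | b <;> simp

lemma sign_psiP {R K : ℕ} {J : Finset (Fin (R+K))} (hJ : J.card = K)
    (σ : Perm (Fin R)) (τ : Perm (Fin K)) :
    Equiv.Perm.sign (psiP R K J σ τ)
      = Equiv.Perm.sign σ * Equiv.Perm.sign τ * Equiv.Perm.sign (psiP R K J 1 1) := by
  rw [psiP_decomp hJ, map_mul]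
  congr 1
  rw [Equiv.Perm.sign_permCongr]
  exact Equiv.Perm.sign_sumCongr σ τ

lemma sign_psiP_one {R K : ℕ} {J : Finset (Fin (R+K))} (hJ : J.card = K) :
    ((Equiv.Perm.sign (psiP R K J 1 1) : ℤ) : ℝ)
      = (-1 : ℝ) ^ ((pairs (R+K)).filter (fun p => p.1 ∈ J ∧ p.2 ∉ J)).card := by
  rw [sign_eq_inversions]
  congr 2
  refine Finset.filter_congr fun p hp => ?_
  have hlt := mem_pairs.1 hp
  constructor
  · intro hinv
    by_contra hcon
    rw [not_and_or, not_not] at hcon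
    by_cases h1 : p.1 ∈ J
    · -- then p.2 ∈ J
      have h2 : p.2 ∈ J := by tauto
      obtain ⟨b1, hb1⟩ := exists_right hJ h1
      obtain ⟨b2, hb2⟩ := exists_right hJ h2
      rw [← hb1, ← hb2, psiP_apply_right hJ, psiP_apply_right hJ] at hinv
      have : b2 < b1 := by
        simp only [Equiv.Perm.one_apply, Fin.lt_def, Fin.coe_natAdd] at hinv
        simp only [Fin.lt_def]
        omega
      have hmono : (b1 : ℕ) < b2 := by
        have := hlt
        rw [← hb1, ← hb2] at this
        have h3 := (J.orderIsoOfFin hJ).lt_iff_lt.1 (by exact_mod_cast this)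
        exact_mod_cast h3
      omega
    · by_cases h2 : p.2 ∈ J
      · obtain ⟨a1, ha1⟩ := exists_left hJ h1
        obtain ⟨b2, hb2⟩ := exists_right hJ h2
        rw [← ha1, ← hb2, psiP_apply_left hJ, psiP_apply_right hJ] at hinv
        simp only [Equiv.Perm.one_apply, Fin.lt_def, Fin.coe_natAdd, Fin.coe_castAdd] at hinv
        omega
      · obtain ⟨a1, ha1⟩ := exists_left hJ h1
        obtain ⟨a2, ha2⟩ := exists_left hJ h2
        rw [← ha1, ← ha2, psiP_apply_left hJ, psiP_apply_left hJ] at hinv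
        have h4 : a2 < a1 := by
          simp only [Equiv.Perm.one_apply, Fin.lt_def, Fin.coe_castAdd] at hinv
          simp only [Fin.lt_def]
          omega
        have hmono : (a1 : ℕ) < a2 := by
          have := hlt
          rw [← ha1, ← ha2] at this
          have h3 := (Jᶜ.orderIsoOfFin (compl_card hJ)).lt_iff_lt.1 (by exact_mod_cast this)
          exact_mod_cast h3
        omega
  · rintro ⟨h1, h2⟩
    obtain ⟨b1, hb1⟩ := exists_right hJ h1
    obtain ⟨a2, ha2⟩ := exists_left hJ h2
    rw [← hb1, ← ha2, psiP_apply_right hJ, psiP_apply_left hJ]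
    simp only [Equiv.Perm.one_apply, Fin.lt_def, Fin.coe_natAdd, Fin.coe_castAdd]
    omega


lemma betheAmp_eq (M : ℕ) (w : Fin M → ℂ) (P : Perm (Fin M)) :
    betheAmp M w P = ((Equiv.Perm.sign P : ℤ) : ℂ)
      * (∏ q ∈ pairs M, (w (P q.1) - w (P q.2) + 2 * Complex.I))
      / ∏ q ∈ pairs M, (w q.1 - w q.2 + 2 * Complex.I) := by
  rw [betheAmp, mul_div_assoc, ← Finset.prod_div_distrib]
  rfl

noncomputable def ampLim (R K : ℕ) (v : Fin R → ℂ) (δ : Fin K → ℂ)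
    (P : Perm (Fin (R+K))) : ℂ :=
  ((Equiv.Perm.sign P : ℤ) : ℂ) * (∏ p ∈ pairs (R+K), nl R K v δ (P p.1) (P p.2))
    / ∏ p ∈ pairs (R+K), nl R K v δ p.1 p.2

lemma core (L R K : ℕ) (v : Fin R → ℂ) (δ : Fin K → ℂ)
    (hv : ∀ j k : Fin R, j ≠ k → v j - v k + 2 * Complex.I ≠ 0)
    (hδ : ∀ j k : Fin K, j < k → δ j - δ k + 2 * Complex.I ≠ 0)
    (S : Finset (Fin L)) (hS : S.card = R + K)
    (J : Finset (Fin (R+K))) (hJ : J.card = K) :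
    ∑ σ : Perm (Fin R), ∑ τ : Perm (Fin K),
      ampLim R K v δ (psiP R K J σ τ)
        * ∏ j : Fin (R+K), elim0 R K v (psiP R K J σ τ j)
            ^ (((S.orderIsoOfFin hS j : Fin L) : ℕ) + 1)
    = (∑ τ : Perm (Fin K), betheAmp K δ τ)
        * betheState L R v (S \ J.image (fun j => (S.orderIsoOfFin hS j : Fin L))) := by
  classical
  set x : Fin (R+K) → ℕ := fun j => ((S.orderIsoOfFin hS j : Fin L) : ℕ) + 1 with hx
  set bb : Fin R → Fin (R+K) := fun a => (Jᶜ.orderIsoOfFin (compl_card hJ) a : Fin (R+K))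
    with hbb
  set aa : Fin K → Fin (R+K) := fun b => (J.orderIsoOfFin hJ b : Fin (R+K)) with haa
  have hbmem : ∀ a, bb a ∉ J := fun a =>
    Finset.mem_compl.1 (Jᶜ.orderIsoOfFin (compl_card hJ) a).2
  have hamem : ∀ b, aa b ∈ J := fun b => (J.orderIsoOfFin hJ b).2
  have hbmono : StrictMono bb := (Jᶜ.orderEmbOfFin (compl_card hJ)).strictMono
  have hamono : StrictMono aa := (J.orderEmbOfFin hJ).strictMono
  have hbsurj : ∀ j ∉ J, ∃ a, bb a = j := fun j hj => exists_left hJ hj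
  have hasurj : ∀ j ∈ J, ∃ b, aa b = j := fun j hj => exists_right hJ hj
  -- denominators
  set DenR : ℂ := ∏ q ∈ pairs R, (v q.1 - v q.2 + 2 * Complex.I) with hDenR
  set DenK : ℂ := ∏ q ∈ pairs K, (δ q.1 - δ q.2 + 2 * Complex.I) with hDenK
  have hDenRne : DenR ≠ 0 :=
    Finset.prod_ne_zero_iff.2 fun q hq => hv q.1 q.2 (mem_pairs.1 hq).ne
  have hDenKne : DenK ≠ 0 :=
    Finset.prod_ne_zero_iff.2 fun q hq => hδ q.1 q.2 (mem_pairs.1 hq)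
  -- cardinalities of mixed pairs
  set m : ℕ := ((pairs (R+K)).filter (fun p => p.1 ∈ J ∧ p.2 ∉ J)).card with hm
  set d : ℕ := ((pairs (R+K)).filter (fun p => p.1 ∉ J ∧ p.2 ∈ J)).card with hd
  have hmd : m + d = K * R := by
    rw [hm, hd, card_mixed J, hJ, compl_card hJ]
  have hJ0card : (univ.filter (fun j : Fin (R+K) => ¬ ((j:ℕ) < R))).card = K := by
    have h := Finset.card_bij (s := (univ : Finset (Fin K)))
      (t := univ.filter (fun j : Fin (R+K) => ¬ ((j:ℕ) < R)))
      (fun b _ => Fin.natAdd R b) (fun b _ => by simp)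
      (fun b _ b' _ h => by
        have h2 : (Fin.natAdd R b : ℕ) = (Fin.natAdd R b' : ℕ) := congrArg Fin.val h
        simp only [Fin.coe_natAdd] at h2
        exact Fin.ext (by omega))
      (fun j hj => by
        simp only [mem_filter, mem_univ, true_and, not_lt] at hj
        exact ⟨⟨(j : ℕ) - R, by omega⟩, mem_univ _, Fin.ext (by simp only [Fin.coe_natAdd]; omega)⟩)
    rw [← h, card_univ, Fintype.card_fin]
  have hc2 : ((pairs (R+K)).filter (fun p => ((p.1:ℕ) < R) ∧ ¬ ((p.2:ℕ) < R))).card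
      = K * R := by
    have h0 := card_mixed (n := R+K) (univ.filter (fun j : Fin (R+K) => ¬ ((j:ℕ) < R)))
    rw [hJ0card, compl_card hJ0card] at h0
    have he1 : ((pairs (R+K)).filter (fun p : Fin (R+K) × Fin (R+K) =>
        p.1 ∈ univ.filter (fun j : Fin (R+K) => ¬ ((j:ℕ) < R))
          ∧ p.2 ∉ univ.filter (fun j : Fin (R+K) => ¬ ((j:ℕ) < R)))).card = 0 := by
      rw [Finset.card_eq_zero, Finset.eq_empty_iff_forall_notMem]
      intro p hp
      simp only [mem_filter, mem_univ, true_and, not_not, mem_pairs] at hp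
      obtain ⟨hlt, h1, h2⟩ := hp
      have := Fin.lt_def.1 hlt
      omega
    have he2 : ((pairs (R+K)).filter (fun p : Fin (R+K) × Fin (R+K) =>
        p.1 ∉ univ.filter (fun j : Fin (R+K) => ¬ ((j:ℕ) < R))
          ∧ p.2 ∈ univ.filter (fun j : Fin (R+K) => ¬ ((j:ℕ) < R)))).card
        = ((pairs (R+K)).filter (fun p => ((p.1:ℕ) < R) ∧ ¬ ((p.2:ℕ) < R))).card := by
      congr 1
      refine Finset.filter_congr fun p hp => ?_
      simp only [mem_filter, mem_univ, true_and, not_not]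
      try tauto
    omega
  have hDen : (∏ p ∈ pairs (R+K), nl R K v δ p.1 p.2) = DenR * DenK * (-1) ^ (K * R) := by
    rw [← Finset.prod_filter_mul_prod_filter_not (pairs (R+K)) (fun p => (p.1 : ℕ) < R),
      ← Finset.prod_filter_mul_prod_filter_not
        ((pairs (R+K)).filter (fun p => (p.1:ℕ) < R)) (fun p => (p.2 : ℕ) < R),
      ← Finset.prod_filter_mul_prod_filter_not
        ((pairs (R+K)).filter (fun p => ¬ (p.1:ℕ) < R)) (fun p => (p.2 : ℕ) < R)]
    simp only [Finset.filter_filter]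
    have hP1 : (∏ p ∈ (pairs (R+K)).filter (fun p => ((p.1:ℕ) < R) ∧ ((p.2:ℕ) < R)),
        nl R K v δ p.1 p.2) = DenR := by
      rw [hDenR]
      rw [prod_pairs_block (fun j : Fin (R+K) => (j:ℕ) < R) (Fin.castAdd K)
        (Fin.strictMono_castAdd K) (fun a => by simp [a.isLt])
        (fun j hj => ⟨⟨(j:ℕ), hj⟩, Fin.ext (by simp)⟩) (fun j k => nl R K v δ j k)]
      refine Finset.prod_congr rfl fun q _ => ?_
      rw [nl, cc_left, cc_left, uu_left, uu_left, sub_self, llim, if_pos rfl]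
    have hP2 : (∏ p ∈ (pairs (R+K)).filter (fun p => ((p.1:ℕ) < R) ∧ ¬ ((p.2:ℕ) < R)),
        nl R K v δ p.1 p.2) = (-1) ^ (K * R) := by
      rw [← hc2, ← Finset.prod_const]
      refine Finset.prod_congr rfl fun p hp => ?_
      simp only [mem_filter, mem_pairs] at hp
      obtain ⟨_, h1, h2⟩ := hp
      obtain ⟨a, ha⟩ : ∃ a : Fin R, Fin.castAdd K a = p.1 := ⟨⟨(p.1:ℕ), h1⟩, Fin.ext rfl⟩
      obtain ⟨b, hb⟩ : ∃ b : Fin K, Fin.natAdd R b = p.2 :=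
        ⟨⟨(p.2:ℕ) - R, by omega⟩, Fin.ext (by simp; omega)⟩
      rw [← ha, ← hb, nl, cc_left, cc_right, llim, if_neg (by norm_num)]
      norm_num
    have hP3 : (∏ p ∈ (pairs (R+K)).filter (fun p => ¬ ((p.1:ℕ) < R) ∧ ((p.2:ℕ) < R)),
        nl R K v δ p.1 p.2) = 1 := by
      refine Finset.prod_eq_one fun p hp => ?_
      simp only [mem_filter, mem_pairs] at hp
      obtain ⟨hlt, h1, h2⟩ := hp
      have := Fin.lt_def.1 hlt
      omega
    have hP4 : (∏ p ∈ (pairs (R+K)).filter (fun p => ¬ ((p.1:ℕ) < R) ∧ ¬ ((p.2:ℕ) < R)),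
        nl R K v δ p.1 p.2) = DenK := by
      rw [hDenK]
      rw [prod_pairs_block (fun j : Fin (R+K) => ¬ ((j:ℕ) < R)) (Fin.natAdd R)
        (Fin.strictMono_natAdd R) (fun b => by simp)
        (fun j hj => ⟨⟨(j:ℕ) - R, by omega⟩, Fin.ext (by simp; omega)⟩)
        (fun j k => nl R K v δ j k)]
      refine Finset.prod_congr rfl fun q _ => ?_
      rw [nl, cc_right, cc_right, uu_right, uu_right, sub_self, llim, if_pos rfl]
    rw [hP1, hP2, hP3, hP4]
    ring
  -- the numerator for ψ = psiP J σ τ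
  have hNum : ∀ (σ : Perm (Fin R)) (τ : Perm (Fin K)),
      (∏ p ∈ pairs (R+K), nl R K v δ (psiP R K J σ τ p.1) (psiP R K J σ τ p.2))
        = (∏ q ∈ pairs R, (v (σ q.1) - v (σ q.2) + 2 * Complex.I))
          * (∏ q ∈ pairs K, (δ (τ q.1) - δ (τ q.2) + 2 * Complex.I)) * (-1) ^ d := by
    intro σ τ
    rw [← Finset.prod_filter_mul_prod_filter_not (pairs (R+K)) (fun p => p.1 ∈ J),
      ← Finset.prod_filter_mul_prod_filter_not
        ((pairs (R+K)).filter (fun p => p.1 ∈ J)) (fun p => p.2 ∈ J),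
      ← Finset.prod_filter_mul_prod_filter_not
        ((pairs (R+K)).filter (fun p => p.1 ∉ J)) (fun p => p.2 ∈ J)]
    simp only [Finset.filter_filter]
    have hQ1 : (∏ p ∈ (pairs (R+K)).filter (fun p => p.1 ∈ J ∧ p.2 ∈ J),
        nl R K v δ (psiP R K J σ τ p.1) (psiP R K J σ τ p.2))
        = ∏ q ∈ pairs K, (δ (τ q.1) - δ (τ q.2) + 2 * Complex.I) := by
      rw [prod_pairs_block (fun j : Fin (R+K) => j ∈ J) aa hamono hamem hasurj
        (fun j k => nl R K v δ (psiP R K J σ τ j) (psiP R K J σ τ k))]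
      refine Finset.prod_congr rfl fun q _ => ?_
      simp only [haa, psiP_apply_right hJ]
      rw [nl, cc_right, cc_right, uu_right, uu_right, sub_self, llim, if_pos rfl]
    have hQ2 : (∏ p ∈ (pairs (R+K)).filter (fun p => p.1 ∈ J ∧ p.2 ∉ J),
        nl R K v δ (psiP R K J σ τ p.1) (psiP R K J σ τ p.2)) = 1 := by
      refine Finset.prod_eq_one fun p hp => ?_
      simp only [mem_filter] at hp
      obtain ⟨-, h1, h2⟩ := hp
      obtain ⟨b, hb⟩ := hasurj p.1 h1
      obtain ⟨a, ha⟩ := hbsurj p.2 h2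
      rw [← hb, ← ha]
      simp only [haa, hbb, psiP_apply_right hJ, psiP_apply_left hJ]
      rw [nl, cc_right, cc_left, llim, if_neg (by norm_num)]
      norm_num
    have hQ3 : (∏ p ∈ (pairs (R+K)).filter (fun p => p.1 ∉ J ∧ p.2 ∈ J),
        nl R K v δ (psiP R K J σ τ p.1) (psiP R K J σ τ p.2)) = (-1) ^ d := by
      rw [hd, ← Finset.prod_const]
      refine Finset.prod_congr rfl fun p hp => ?_
      simp only [mem_filter] at hp
      obtain ⟨-, h1, h2⟩ := hp
      obtain ⟨a, ha⟩ := hbsurj p.1 h1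
      obtain ⟨b, hb⟩ := hasurj p.2 h2
      rw [← hb, ← ha]
      simp only [haa, hbb, psiP_apply_right hJ, psiP_apply_left hJ]
      rw [nl, cc_left, cc_right, llim, if_neg (by norm_num)]
      norm_num
    have hQ4 : (∏ p ∈ (pairs (R+K)).filter (fun p => p.1 ∉ J ∧ p.2 ∉ J),
        nl R K v δ (psiP R K J σ τ p.1) (psiP R K J σ τ p.2))
        = ∏ q ∈ pairs R, (v (σ q.1) - v (σ q.2) + 2 * Complex.I) := by
      rw [prod_pairs_block (fun j : Fin (R+K) => j ∉ J) bb hbmono hbmem hbsurj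
        (fun j k => nl R K v δ (psiP R K J σ τ j) (psiP R K J σ τ k))]
      refine Finset.prod_congr rfl fun q _ => ?_
      simp only [hbb, psiP_apply_left hJ]
      rw [nl, cc_left, cc_left, uu_left, uu_left, sub_self, llim, if_pos rfl]
    rw [hQ1, hQ2, hQ3, hQ4]
    ring
  -- the sign
  have hSign : ∀ (σ : Perm (Fin R)) (τ : Perm (Fin K)),
      ((Equiv.Perm.sign (psiP R K J σ τ) : ℤ) : ℂ)
        = ((Equiv.Perm.sign σ : ℤ) : ℂ) * ((Equiv.Perm.sign τ : ℤ) : ℂ) * (-1) ^ m := by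
    intro σ τ
    have h1 := sign_psiP hJ σ τ
    have h2 := sign_psiP_one (R := R) (K := K) (J := J) hJ
    have h3 := congrArg (fun t : ℝ => (t : ℂ)) h2
    push_cast at h3
    rw [h1]
    push_cast
    rw [← hm] at h3
    rw [h3]
  -- the e-factor product
  have hE : ∀ (σ : Perm (Fin R)) (τ : Perm (Fin K)),
      (∏ j : Fin (R+K), elim0 R K v (psiP R K J σ τ j) ^ x j)
        = ∏ a : Fin R, ee (v (σ a)) ^ x (bb a) := by
    intro σ τ
    rw [← Finset.prod_filter_mul_prod_filter_not univ (fun j => j ∈ J)]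
    have h1 : (∏ j ∈ univ.filter (fun j => j ∈ J), elim0 R K v (psiP R K J σ τ j) ^ x j)
        = 1 := by
      refine Finset.prod_eq_one fun j hj => ?_
      obtain ⟨b, hb⟩ := hasurj j (by simpa using hj)
      rw [← hb]
      simp only [haa, psiP_apply_right hJ, elim0_right, one_pow]
    have h2 : (∏ j ∈ univ.filter (fun j => j ∉ J), elim0 R K v (psiP R K J σ τ j) ^ x j)
        = ∏ a : Fin R, ee (v (σ a)) ^ x (bb a) := by
      rw [prod_block (fun j : Fin (R+K) => j ∉ J) bb hbmono.injective hbmem hbsurj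
        (fun j => elim0 R K v (psiP R K J σ τ j) ^ x j)]
      refine Finset.prod_congr rfl fun a _ => ?_
      congr 1
      simp only [hbb, psiP_apply_left hJ, elim0_left]
    rw [h1, h2, one_mul]
  have hTsub : J.image (fun j => (S.orderIsoOfFin hS j : Fin L)) ⊆ S := by
    intro t ht
    obtain ⟨j, _, rfl⟩ := Finset.mem_image.1 ht
    exact (S.orderIsoOfFin hS j).2
  have hTcard : (J.image (fun j => (S.orderIsoOfFin hS j : Fin L))).card = K := by
    rw [Finset.card_image_of_injective _ (fun j j' h => by
      exact (S.orderIsoOfFin hS).injective (Subtype.ext h)), hJ]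
  have hSTcard : (S \ J.image (fun j => (S.orderIsoOfFin hS j : Fin L))).card = R := by
    rw [Finset.card_sdiff_of_subset hTsub, hTcard, hS, Nat.add_sub_cancel]
  have hord : ∀ a : Fin R,
      (S \ J.image (fun j => (S.orderIsoOfFin hS j : Fin L))).orderEmbOfFin hSTcard a
        = S.orderEmbOfFin hS (bb a) := by
    have key := Finset.orderEmbOfFin_unique (f := fun a => S.orderEmbOfFin hS (bb a))
      hSTcard (fun a => ?_) ((S.orderEmbOfFin hS).strictMono.comp hbmono)
    · intro a
      exact (congrFun key a).symm
    · rw [Finset.mem_sdiff]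
      constructor
      · exact Finset.orderEmbOfFin_mem _ _ _
      · intro hmem
        obtain ⟨j, hjJ, hj⟩ := Finset.mem_image.1 hmem
        have heq : bb a = j :=
          ((S.orderEmbOfFin hS).injective
            (show S.orderEmbOfFin hS j = S.orderEmbOfFin hS (bb a) from hj)).symm
        exact hbmem a (heq ▸ hjJ)
  have hBS : betheState L R v (S \ J.image (fun j => (S.orderIsoOfFin hS j : Fin L)))
      = ∑ σ : Perm (Fin R), betheAmp R v σ * ∏ a : Fin R, ee (v (σ a)) ^ x (bb a) := by
    rw [betheState, dif_pos hSTcard]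
    refine Finset.sum_congr rfl fun σ _ => ?_
    congr 1
    refine Finset.prod_congr rfl fun a _ => ?_
    rw [ee, hx]
    congr 2
    rw [Finset.coe_orderIsoOfFin_apply, Finset.coe_orderIsoOfFin_apply, hord a]
  -- put it together
  rw [hBS, Finset.mul_sum]
  refine Finset.sum_congr rfl fun σ _ => ?_
  rw [Finset.sum_mul]
  refine Finset.sum_congr rfl fun τ _ => ?_
  rw [ampLim, hNum σ τ, hDen, hSign σ τ, hE σ τ, betheAmp_eq, betheAmp_eq]
  have hpow : ((-1 : ℂ)) ^ m * (-1) ^ d = (-1) ^ (K * R) := by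
    rw [← pow_add, hmd]
  have hne1 : ((-1 : ℂ)) ^ m ≠ 0 := pow_ne_zero _ (by norm_num)
  have hne2 : ((-1 : ℂ)) ^ d ≠ 0 := pow_ne_zero _ (by norm_num)
  rw [← hpow]
  rw [← hDenR, ← hDenK]
  field_simp

lemma psiP_big_iff {R K : ℕ} {J : Finset (Fin (R+K))} (hJ : J.card = K)
    (σ : Perm (Fin R)) (τ : Perm (Fin K)) (j : Fin (R+K)) :
    j ∈ J ↔ R ≤ ((psiP R K J σ τ j : Fin (R+K)) : ℕ) := by
  constructor
  · intro hj
    obtain ⟨b, hb⟩ := exists_right hJ hj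
    rw [← hb, psiP_apply_right hJ]
    simp [Fin.coe_natAdd]
  · intro hge
    by_contra hj
    obtain ⟨a, ha⟩ := exists_left hJ hj
    rw [← ha, psiP_apply_left hJ] at hge
    simp only [Fin.coe_castAdd] at hge
    exact absurd hge (not_le.2 (σ a).isLt)

lemma psiP_inj {R K : ℕ} {J J' : Finset (Fin (R+K))} (hJ : J.card = K) (hJ' : J'.card = K)
    {σ σ' : Perm (Fin R)} {τ τ' : Perm (Fin K)}
    (h : psiP R K J σ τ = psiP R K J' σ' τ') : J = J' ∧ σ = σ' ∧ τ = τ' := by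
  have hJJ : J = J' := by
    ext j
    rw [psiP_big_iff hJ σ τ j, psiP_big_iff hJ' σ' τ' j, h]
  subst hJJ
  refine ⟨rfl, ?_, ?_⟩
  · ext a : 1
    have h1 : Fin.castAdd K (σ a) = Fin.castAdd K (σ' a) := by
      rw [← psiP_apply_left hJ σ τ a, ← psiP_apply_left hJ σ' τ' a, h]
    have := congrArg Fin.val h1
    exact Fin.val_injective this
  · ext b : 1
    have h1 : Fin.natAdd R (τ b) = Fin.natAdd R (τ' b) := by
      rw [← psiP_apply_right hJ σ τ b, ← psiP_apply_right hJ σ' τ' b, h]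
    have := congrArg Fin.val h1
    simp only [Fin.coe_natAdd] at this
    exact Fin.val_injective (by omega)

lemma sum_psi (R K : ℕ) (F : Perm (Fin (R+K)) → ℂ) :
    ∑ z ∈ (Finset.powersetCard K (univ : Finset (Fin (R+K))))
        ×ˢ (univ : Finset (Perm (Fin R) × Perm (Fin K))),
      F (psiP R K z.1 z.2.1 z.2.2)
    = ∑ P : Perm (Fin (R+K)), F P := by
  classical
  have hcardJ : ∀ z ∈ (Finset.powersetCard K (univ : Finset (Fin (R+K))))
      ×ˢ (univ : Finset (Perm (Fin R) × Perm (Fin K))), z.1.card = K := by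
    intro z hz
    rw [Finset.mem_product] at hz
    exact (Finset.mem_powersetCard.1 hz.1).2
  have hinj : ∀ z₁ (hz₁ : z₁ ∈ (Finset.powersetCard K (univ : Finset (Fin (R+K))))
        ×ˢ (univ : Finset (Perm (Fin R) × Perm (Fin K)))),
      ∀ z₂ (hz₂ : z₂ ∈ (Finset.powersetCard K (univ : Finset (Fin (R+K))))
        ×ˢ (univ : Finset (Perm (Fin R) × Perm (Fin K)))),
      psiP R K z₁.1 z₁.2.1 z₁.2.2 = psiP R K z₂.1 z₂.2.1 z₂.2.2 → z₁ = z₂ := by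
    intro z₁ hz₁ z₂ hz₂ heq
    obtain ⟨h1, h2, h3⟩ := psiP_inj (hcardJ z₁ hz₁) (hcardJ z₂ hz₂) heq
    exact Prod.ext h1 (Prod.ext h2 h3)
  have hcard : ((univ : Finset (Perm (Fin (R+K))))).card
      ≤ ((Finset.powersetCard K (univ : Finset (Fin (R+K))))
        ×ˢ (univ : Finset (Perm (Fin R) × Perm (Fin K)))).card := by
    rw [Finset.card_product, Finset.card_powersetCard, card_univ, card_univ, card_univ]
    rw [Fintype.card_perm, Fintype.card_prod, Fintype.card_perm, Fintype.card_perm]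
    simp only [Fintype.card_fin]
    have h := Nat.choose_mul_factorial_mul_factorial (Nat.le_add_left K R)
    have h2 : R + K - K = R := by omega
    rw [h2] at h
    rw [← h]
    ring_nf
    omega
  refine Finset.sum_bij (fun z _ => psiP R K z.1 z.2.1 z.2.2) (fun z _ => mem_univ _)
    (fun z₁ h₁ z₂ h₂ => hinj z₁ h₁ z₂ h₂) ?_ (fun z _ => rfl)
  intro P _
  obtain ⟨z, hz, hzP⟩ := Finset.surj_on_of_inj_on_of_card_le
    (fun z _ => psiP R K z.1 z.2.1 z.2.2) (fun z _ => mem_univ _)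
    (fun z₁ z₂ h₁ h₂ => hinj z₁ h₁ z₂ h₂) hcard P (mem_univ P)
  exact ⟨z, hz, hzP.symm⟩

lemma sum_J_to_T (L R K : ℕ) (S : Finset (Fin L)) (hS : S.card = R + K)
    (G : Finset (Fin L) → ℂ) :
    ∑ J ∈ Finset.powersetCard K (univ : Finset (Fin (R+K))),
      G (J.image (fun j => (S.orderIsoOfFin hS j : Fin L)))
    = ∑ T ∈ S.powersetCard K, G T := by
  classical
  refine Finset.sum_bij (fun J _ => J.image (fun j => (S.orderIsoOfFin hS j : Fin L)))
    ?_ ?_ ?_ (fun J _ => rfl)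
  · intro J hJ
    rw [Finset.mem_powersetCard] at hJ ⊢
    constructor
    · intro t ht
      obtain ⟨j, _, rfl⟩ := Finset.mem_image.1 ht
      exact (S.orderIsoOfFin hS j).2
    · rw [Finset.card_image_of_injective _ (fun j j' h =>
        (S.orderIsoOfFin hS).injective (Subtype.ext h)), hJ.2]
  · intro J hJ J' hJ' heq
    exact Finset.image_injective (f := fun j => ((S.orderIsoOfFin hS j : Fin L)))
      (fun j j' h => (S.orderIsoOfFin hS).injective (Subtype.ext h)) heq
  · intro T hT
    rw [Finset.mem_powersetCard] at hT
    have himg : (univ.filter (fun j => (S.orderIsoOfFin hS j : Fin L) ∈ T)).image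
        (fun j => (S.orderIsoOfFin hS j : Fin L)) = T := by
      ext t
      constructor
      · intro ht
        obtain ⟨j, hj, rfl⟩ := Finset.mem_image.1 ht
        exact (Finset.mem_filter.1 hj).2
      · intro ht
        refine Finset.mem_image.2 ⟨(S.orderIsoOfFin hS).symm ⟨t, hT.1 ht⟩, ?_, ?_⟩
        · rw [Finset.mem_filter]
          refine ⟨mem_univ _, ?_⟩
          rw [OrderIso.apply_symm_apply]
          exact ht
        · rw [OrderIso.apply_symm_apply]
    refine ⟨univ.filter (fun j => (S.orderIsoOfFin hS j : Fin L) ∈ T), ?_, himg⟩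
    rw [Finset.mem_powersetCard]
    refine ⟨Finset.subset_univ _, ?_⟩
    have hcard := Finset.card_image_of_injective
      (univ.filter (fun j => (S.orderIsoOfFin hS j : Fin L) ∈ T))
      (fun (j : Fin (R+K)) j' (h : ((S.orderIsoOfFin hS j : Fin L)) = _) =>
        (S.orderIsoOfFin hS).injective (Subtype.ext h))
    rw [himg] at hcard
    rw [← hcard, hT.2]

lemma mdeg_symm (a b : ℂ) : mdeg (a - b) = mdeg (b - a) := by
  rcases eq_or_ne a b with h | h
  · subst h; rfl
  · rw [mdeg, mdeg, if_neg (sub_ne_zero.2 h), if_neg (sub_ne_zero.2 h.symm)]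

lemma nl_den_ne_zero (R K : ℕ) (v : Fin R → ℂ) (δ : Fin K → ℂ)
    (hv : ∀ j k : Fin R, j ≠ k → v j - v k + 2 * Complex.I ≠ 0)
    (hδ : ∀ j k : Fin K, j < k → δ j - δ k + 2 * Complex.I ≠ 0) :
    ∀ p ∈ pairs (R+K), nl R K v δ p.1 p.2 ≠ 0 := by
  intro p hp
  have hlt := Fin.lt_def.1 (mem_pairs.1 hp)
  by_cases h1 : (p.1 : ℕ) < R <;> by_cases h2 : (p.2 : ℕ) < R
  · obtain ⟨a, ha⟩ : ∃ a : Fin R, Fin.castAdd K a = p.1 := ⟨⟨(p.1:ℕ), h1⟩, Fin.ext rfl⟩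
    obtain ⟨b, hb⟩ : ∃ b : Fin R, Fin.castAdd K b = p.2 := ⟨⟨(p.2:ℕ), h2⟩, Fin.ext rfl⟩
    rw [← ha, ← hb, nl, cc_left, cc_left, uu_left, uu_left, sub_self, llim, if_pos rfl]
    refine hv a b fun h => ?_
    rw [h] at ha
    rw [← ha, Fin.coe_castAdd] at hlt
    rw [← hb, Fin.coe_castAdd] at hlt
    omega
  · obtain ⟨a, ha⟩ : ∃ a : Fin R, Fin.castAdd K a = p.1 := ⟨⟨(p.1:ℕ), h1⟩, Fin.ext rfl⟩
    obtain ⟨b, hb⟩ : ∃ b : Fin K, Fin.natAdd R b = p.2 :=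
      ⟨⟨(p.2:ℕ) - R, by omega⟩, Fin.ext (by simp only [Fin.coe_natAdd]; omega)⟩
    rw [← ha, ← hb, nl, cc_left, cc_right, llim, if_neg (by norm_num)]
    norm_num
  · omega
  · obtain ⟨a, ha⟩ : ∃ a : Fin K, Fin.natAdd R a = p.1 :=
      ⟨⟨(p.1:ℕ) - R, by omega⟩, Fin.ext (by simp only [Fin.coe_natAdd]; omega)⟩
    obtain ⟨b, hb⟩ : ∃ b : Fin K, Fin.natAdd R b = p.2 :=
      ⟨⟨(p.2:ℕ) - R, by omega⟩, Fin.ext (by simp only [Fin.coe_natAdd]; omega)⟩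
    rw [← ha, ← hb, nl, cc_right, cc_right, uu_right, uu_right, sub_self, llim, if_pos rfl]
    refine hδ a b ?_
    rw [← ha, Fin.coe_natAdd] at hlt
    rw [← hb, Fin.coe_natAdd] at hlt
    simp only [Fin.lt_def]
    omega

lemma tendsto_amp (R K : ℕ) (v : Fin R → ℂ) (δ : Fin K → ℂ)
    (hv : ∀ j k : Fin R, j ≠ k → v j - v k + 2 * Complex.I ≠ 0)
    (hδ : ∀ j k : Fin K, j < k → δ j - δ k + 2 * Complex.I ≠ 0)
    (P : Perm (Fin (R+K))) :
    Tendsto (fun Λ : ℝ =>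
        betheAmp (R+K) (fun j => cc R K j * Λ + uu R K v δ j) P)
      atTop (nhds (ampLim R K v δ P)) := by
  have hDne : (∏ p ∈ pairs (R+K), nl R K v δ p.1 p.2) ≠ 0 :=
    Finset.prod_ne_zero_iff.2 (nl_den_ne_zero R K v δ hv hδ)
  set M : ℕ := ∑ p ∈ pairs (R+K), mdeg (cc R K p.1 - cc R K p.2) with hM
  have hMeq : ∑ p ∈ pairs (R+K), mdeg (cc R K (P p.1) - cc R K (P p.2)) = M :=
    sum_pairs_perm P (fun a b => mdeg (cc R K a - cc R K b))
      (fun a b => mdeg_symm (cc R K a) (cc R K b))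
  have hN : Tendsto (fun Λ : ℝ => ∏ p ∈ pairs (R+K),
      ((cc R K (P p.1) - cc R K (P p.2)) * Λ
        + (uu R K v δ (P p.1) - uu R K v δ (P p.2) + 2 * Complex.I))
        / (Λ : ℂ) ^ (mdeg (cc R K (P p.1) - cc R K (P p.2))))
      atTop (nhds (∏ p ∈ pairs (R+K), nl R K v δ (P p.1) (P p.2))) :=
    tendsto_finset_prod _ fun p _ => tendsto_affine _ _
  have hD : Tendsto (fun Λ : ℝ => ∏ p ∈ pairs (R+K),
      ((cc R K p.1 - cc R K p.2) * Λ
        + (uu R K v δ p.1 - uu R K v δ p.2 + 2 * Complex.I))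
        / (Λ : ℂ) ^ (mdeg (cc R K p.1 - cc R K p.2)))
      atTop (nhds (∏ p ∈ pairs (R+K), nl R K v δ p.1 p.2)) :=
    tendsto_finset_prod _ fun p _ => tendsto_affine _ _
  have hcomb := ((tendsto_const_nhds (x := ((Equiv.Perm.sign P : ℤ) : ℂ))).mul hN).div
    hD hDne
  rw [ampLim]
  refine hcomb.congr' ?_
  filter_upwards [eventually_ge_atTop (1:ℝ)] with Λ hΛ
  have hΛ0 : (Λ:ℂ) ≠ 0 := by
    simp only [ne_eq, Complex.ofReal_eq_zero]
    intro h; rw [h] at hΛ; linarith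
  have hΛM : (Λ:ℂ) ^ M ≠ 0 := pow_ne_zero _ hΛ0
  simp only [Pi.div_apply]
  rw [Finset.prod_div_distrib, Finset.prod_div_distrib, Finset.prod_pow_eq_pow_sum,
    Finset.prod_pow_eq_pow_sum, hMeq, ← hM]
  rw [betheAmp_eq]
  have h1 : ∀ a b : Fin (R+K),
      (fun j => cc R K j * Λ + uu R K v δ j) a - (fun j => cc R K j * Λ + uu R K v δ j) b
        + 2 * Complex.I
      = (cc R K a - cc R K b) * Λ + (uu R K v δ a - uu R K v δ b + 2 * Complex.I) := by
    intro a b; dsimp only; ring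
  have h2 : (∏ q ∈ pairs (R+K), ((fun j => cc R K j * (Λ:ℂ) + uu R K v δ j) (P q.1)
      - (fun j => cc R K j * (Λ:ℂ) + uu R K v δ j) (P q.2) + 2 * Complex.I))
      = ∏ q ∈ pairs (R+K), ((cc R K (P q.1) - cc R K (P q.2)) * Λ
        + (uu R K v δ (P q.1) - uu R K v δ (P q.2) + 2 * Complex.I)) :=
    Finset.prod_congr rfl fun q _ => h1 (P q.1) (P q.2)
  have h3 : (∏ q ∈ pairs (R+K), ((fun j => cc R K j * (Λ:ℂ) + uu R K v δ j) q.1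
      - (fun j => cc R K j * (Λ:ℂ) + uu R K v δ j) q.2 + 2 * Complex.I))
      = ∏ q ∈ pairs (R+K), ((cc R K q.1 - cc R K q.2) * Λ
        + (uu R K v δ q.1 - uu R K v δ q.2 + 2 * Complex.I)) :=
    Finset.prod_congr rfl fun q _ => h1 q.1 q.2
  rw [h2, h3]
  rw [mul_div_assoc, mul_div_assoc, div_div_div_same _ _ _ hΛM]

lemma tendsto_ee (R K : ℕ) (v : Fin R → ℂ) (δ : Fin K → ℂ) (q : Fin (R+K)) :
    Tendsto (fun Λ : ℝ => ee (cc R K q * Λ + uu R K v δ q)) atTop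
      (nhds (elim0 R K v q)) := by
  refine Fin.addCases ?_ ?_ q
  · intro a
    simp only [cc_left, uu_left, elim0_left, zero_mul, zero_add]
    exact tendsto_const_nhds
  · intro b
    simp only [cc_right, uu_right, elim0_right, one_mul]
    have h := tendsto_frac (δ b + Complex.I) (δ b - Complex.I)
    refine h.congr fun Λ => ?_
    rw [ee]
    congr 1 <;> ring
lemma tendsto_main (L R K : ℕ) (v : Fin R → ℂ) (δ : Fin K → ℂ)
    (hv : ∀ j k : Fin R, j ≠ k → v j - v k + 2 * Complex.I ≠ 0)
    (hδ : ∀ j k : Fin K, j < k → δ j - δ k + 2 * Complex.I ≠ 0)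
    (S : Finset (Fin L)) (hS : S.card = R + K) :
    Tendsto (fun Λ : ℝ => betheState L (R + K)
        (Fin.addCases (motive := fun _ => ℂ) v (fun j => (Λ : ℂ) + δ j)) S)
      atTop
      (nhds (∑ P : Perm (Fin (R+K)), ampLim R K v δ P
        * ∏ j : Fin (R+K), elim0 R K v (P j)
            ^ (((S.orderIsoOfFin hS j : Fin L) : ℕ) + 1))) := by
  have hfun : ∀ Λ : ℝ, betheState L (R + K)
      (Fin.addCases (motive := fun _ => ℂ) v (fun j => (Λ : ℂ) + δ j)) S
      = ∑ P : Perm (Fin (R+K)),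
          betheAmp (R+K) (fun j => cc R K j * Λ + uu R K v δ j) P
            * ∏ j : Fin (R+K), ee (cc R K (P j) * Λ + uu R K v δ (P j))
                ^ (((S.orderIsoOfFin hS j : Fin L) : ℕ) + 1) := by
    intro Λ
    have hfeq : (Fin.addCases (motive := fun _ => ℂ) v (fun j => (Λ : ℂ) + δ j))
        = fun j => cc R K j * Λ + uu R K v δ j := by
      funext j
      refine Fin.addCases ?_ ?_ j
      · intro a; rw [Fin.addCases_left, cc_left, uu_left]; ring
      · intro b; rw [Fin.addCases_right, cc_right, uu_right]; ring
    rw [betheState, dif_pos hS, hfeq]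
    rfl
  refine (tendsto_finset_sum _ fun P _ => ?_).congr (fun Λ => (hfun Λ).symm)
  exact (tendsto_amp R K v δ hv hδ P).mul
    (tendsto_finset_prod _ fun j _ => (tendsto_ee R K v δ (P j)).pow _)

end T31

open T31

/-- Theorem III.1: if `v₁,…,v_R` satisfy the Bethe ansatz equations (a regular Bethe
state) and `δ₁,…,δ_K` are generic, then for every down-spin configuration `S`, the
coefficient of the formal Bethe state with rapidities `v₁,…,v_R, Λ+δ₁,…,Λ+δ_K`
converges, as `Λ → +∞`, to `C_K · (1/K!) · ((S⁻)^K G_R[v])(S)`, i.e. the limit of the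
formal Bethe state is `C_K` times the non-regular descendant eigenstate. -/
theorem theorem_III_1 (L R K : ℕ) (hRK : R + K ≤ L)
    (v : Fin R → ℂ) (δ : Fin K → ℂ)
    (hvI : ∀ j, v j ≠ Complex.I) (hvI' : ∀ j, v j ≠ -Complex.I)
    (hv : ∀ j k : Fin R, j ≠ k → v j - v k + 2 * Complex.I ≠ 0)
    (hv' : ∀ j k : Fin R, j ≠ k → v j - v k - 2 * Complex.I ≠ 0)
    (hBAE : ∀ j : Fin R,
      ((v j + Complex.I) / (v j - Complex.I)) ^ L
        = ∏ l ∈ univ.erase j, (v j - v l + 2 * Complex.I) / (v j - v l - 2 * Complex.I))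
    (hδ : ∀ j k : Fin K, j < k → δ j - δ k + 2 * Complex.I ≠ 0)
    (S : Finset (Fin L)) :
    Filter.Tendsto
      (fun Λ : ℝ => betheState L (R + K)
        (Fin.addCases (motive := fun _ => ℂ) v (fun j => (Λ : ℂ) + δ j)) S)
      Filter.atTop
      (nhds ((∑ Q : Equiv.Perm (Fin K), betheAmp K δ Q) *
        ((1 / (Nat.factorial K : ℂ)) * (lowerOp L)^[K] (betheState L R v) S))) := by
  classical
  by_cases hS : S.card = R + K
  · -- main case
    have hfaczero : (Nat.factorial K : ℂ) ≠ 0 :=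
      Nat.cast_ne_zero.2 (Nat.factorial_ne_zero K)
    have hval : (∑ Q : Equiv.Perm (Fin K), betheAmp K δ Q) *
        ((1 / (Nat.factorial K : ℂ)) * (lowerOp L)^[K] (betheState L R v) S)
        = ∑ P : Equiv.Perm (Fin (R+K)), ampLim R K v δ P
            * ∏ j : Fin (R+K), elim0 R K v (P j)
                ^ (((S.orderIsoOfFin hS j : Fin L) : ℕ) + 1) := by
      have h1 := sum_psi R K (fun P => ampLim R K v δ P
        * ∏ j : Fin (R+K), elim0 R K v (P j)
            ^ (((S.orderIsoOfFin hS j : Fin L) : ℕ) + 1))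
      rw [← h1, Finset.sum_product]
      have h2 : ∀ J ∈ Finset.powersetCard K (univ : Finset (Fin (R+K))),
          (∑ w : Equiv.Perm (Fin R) × Equiv.Perm (Fin K),
            ampLim R K v δ (psiP R K J w.1 w.2)
              * ∏ j : Fin (R+K), elim0 R K v (psiP R K J w.1 w.2 j)
                  ^ (((S.orderIsoOfFin hS j : Fin L) : ℕ) + 1))
          = (∑ τ : Equiv.Perm (Fin K), betheAmp K δ τ)
              * betheState L R v
                  (S \ J.image (fun j => (S.orderIsoOfFin hS j : Fin L))) := by
        intro J hJm
        have hJ : J.card = K := (Finset.mem_powersetCard.1 hJm).2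
        rw [Fintype.sum_prod_type]
        exact core L R K v δ hv hδ S hS J hJ
      rw [Finset.sum_congr rfl h2, ← Finset.mul_sum,
        sum_J_to_T L R K S hS (fun T => betheState L R v (S \ T))]
      rw [lowerOp_iter, ← Finset.mul_sum]
      rw [← mul_assoc ((1:ℂ) / (Nat.factorial K : ℂ))]
      rw [one_div, inv_mul_cancel₀ hfaczero, one_mul]
    rw [hval]
    exact tendsto_main L R K v δ hv hδ S hS
  · -- degenerate case: both sides vanish
    have hLHS : ∀ Λ : ℝ, betheState L (R + K)
        (Fin.addCases (motive := fun _ => ℂ) v (fun j => (Λ : ℂ) + δ j)) S = 0 :=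
      fun Λ => dif_neg hS
    have hval : (∑ Q : Equiv.Perm (Fin K), betheAmp K δ Q) *
        ((1 / (Nat.factorial K : ℂ)) * (lowerOp L)^[K] (betheState L R v) S) = 0 := by
      rw [lowerOp_iter]
      have hz : ∀ T ∈ S.powersetCard K,
          (K.factorial : ℂ) * betheState L R v (S \ T) = 0 := by
        intro T hT
        rw [Finset.mem_powersetCard] at hT
        have hTle : T.card ≤ S.card := Finset.card_le_card hT.1
        have hne : (S \ T).card ≠ R := by
          rw [Finset.card_sdiff_of_subset hT.1, hT.2]
          omega
        rw [betheState, dif_neg hne, mul_zero]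
      rw [Finset.sum_eq_zero hz, mul_zero, mul_zero]
    rw [hval]
    exact tendsto_const_nhds.congr (fun Λ => (hLHS Λ).symm)
end

section
/- Let M ∈ ℕ, let v₁,…,v_M ∈ ℂ satisfy v_j − v_k + 2i ≠ 0 for all 1 ≤ j < k ≤ M, and suppose there are indices a ≠ b with v_a = v_b. Then for every permutation P of {1,…,M}, A_M(P)[v₁,…,v_M] + A_M((a b)∘P)[v₁,…,v_M] = 0, where (a b) denotes the transposition of a and b and (a b)∘P is the composite permutation applying P first (the key cancellation in the proof of the "Pauli principle", Appendix D). -/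
open Finset

/-- The key cancellation in the proof of the "Pauli principle" (Appendix D): if two
rapidities coincide, `v_a = v_b` with `a ≠ b`, then for every permutation `P`,
`A_M(P) + A_M((a b)∘P) = 0`, where `(a b)∘P` applies `P` first. -/
theorem pauli_cancellation (M : ℕ) (v : Fin M → ℂ)
    (hv : ∀ j k : Fin M, j < k → v j - v k + 2 * Complex.I ≠ 0)
    (a b : Fin M) (hab : a ≠ b) (hvab : v a = v b)
    (P : Equiv.Perm (Fin M)) :
    betheAmp M v P + betheAmp M v (Equiv.swap a b * P) = 0 := by
  have hvs : ∀ x, v (Equiv.swap a b x) = v x := by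
    intro x
    rw [Equiv.swap_apply_def]
    split_ifs with h1 h2
    · rw [h1, hvab]
    · rw [h2, hvab]
    · rfl
  unfold betheAmp
  rw [Equiv.Perm.sign_mul, Equiv.Perm.sign_swap hab]
  simp only [Equiv.Perm.mul_apply, hvs]
  push_cast
  ring
end

section
/- ("Pauli principle" of the Bethe ansatz.) Let M ∈ ℕ, let v₁,…,v_M ∈ ℂ satisfy v_j ≠ i for all j and v_j − v_k + 2i ≠ 0 for all 1 ≤ j < k ≤ M, and suppose there are indices a ≠ b with v_a = v_b. Then the Bethe ansatz wavefunction vanishes identically: f_M(x₁,…,x_M; v₁,…,v_M) = 0 for all integer coordinates x₁,…,x_M (Appendix D). -/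
open Finset

/-- The Bethe ansatz wavefunction
`f_M(x₁,…,x_M; v₁,…,v_M) = Σ_{P ∈ S_M} A_M(P)[v] · ∏_j ((v_{Pj}+i)/(v_{Pj}−i))^{x_j}`
at integer coordinates. -/
noncomputable def betheWF (M : ℕ) (v : Fin M → ℂ) (x : Fin M → ℤ) : ℂ :=
  ∑ P : Equiv.Perm (Fin M), betheAmp M v P *
    ∏ j : Fin M, ((v (P j) + Complex.I) / (v (P j) - Complex.I)) ^ (x j)

/-- "Pauli principle" of the Bethe ansatz (Appendix D): if two rapidities coincide,
`v_a = v_b` with `a ≠ b`, then the Bethe ansatz wavefunction vanishes identically. -/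
theorem pauli_principle (M : ℕ) (v : Fin M → ℂ)
    (hvI : ∀ j, v j ≠ Complex.I)
    (hv : ∀ j k : Fin M, j < k → v j - v k + 2 * Complex.I ≠ 0)
    (a b : Fin M) (hab : a ≠ b) (hvab : v a = v b)
    (x : Fin M → ℤ) :
    betheWF M v x = 0 := by
  have hswap : ∀ j, v (Equiv.swap a b j) = v j := by
    intro j
    rcases eq_or_ne j a with rfl | hja
    · simp [Equiv.swap_apply_left, hvab]
    rcases eq_or_ne j b with rfl | hjb
    · simp [Equiv.swap_apply_right, hvab]
    · rw [Equiv.swap_apply_of_ne_of_ne hja hjb]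
  have hamp : ∀ P : Equiv.Perm (Fin M),
      betheAmp M v (Equiv.swap a b * P) = - betheAmp M v P := by
    intro P
    unfold betheAmp
    have hprod : ∏ jk ∈ univ.filter (fun jk : Fin M × Fin M => jk.1 < jk.2),
        (v ((Equiv.swap a b * P) jk.1) - v ((Equiv.swap a b * P) jk.2) + 2 * Complex.I) /
          (v jk.1 - v jk.2 + 2 * Complex.I)
        = ∏ jk ∈ univ.filter (fun jk : Fin M × Fin M => jk.1 < jk.2),
        (v (P jk.1) - v (P jk.2) + 2 * Complex.I) / (v jk.1 - v jk.2 + 2 * Complex.I) := by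
      refine Finset.prod_congr rfl fun jk _ => ?_
      simp [Equiv.Perm.mul_apply, hswap]
    rw [hprod, map_mul, Equiv.Perm.sign_swap hab]
    push_cast
    ring
  have hterm : ∀ P : Equiv.Perm (Fin M),
      ∏ j : Fin M, ((v ((Equiv.swap a b * P) j) + Complex.I) /
          (v ((Equiv.swap a b * P) j) - Complex.I)) ^ (x j)
        = ∏ j : Fin M, ((v (P j) + Complex.I) / (v (P j) - Complex.I)) ^ (x j) := by
    intro P
    refine Finset.prod_congr rfl fun j _ => ?_
    simp [Equiv.Perm.mul_apply, hswap]
  have key : betheWF M v x = - betheWF M v x := by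
    unfold betheWF
    rw [← Finset.sum_neg_distrib]
    refine Fintype.sum_equiv (Equiv.mulLeft (Equiv.swap a b)) _ _ fun P => ?_
    simp only [Equiv.coe_mulLeft, hamp, hterm]
    ring
  have h2 : betheWF M v x + betheWF M v x = 0 := by
    nth_rewrite 1 [key]; ring
  simpa [two_mul] using add_self_eq_zero.mp h2
end

section
/- Let M ∈ ℕ, Δ ∈ ℂ, k₁,…,k_M ∈ ℂ, and let B be a complex-valued function on the symmetric group S_M satisfying the vanishing conditions: for every Q ∈ S_M and every j ∈ {1,…,M−1}, B(Q)·(1 + exp(i(k_{Qj} + k_{Q(j+1)})) − 2Δ·exp(i k_{Q(j+1)})) + B(Q∘π_j)·(1 + exp(i(k_{Qj} + k_{Q(j+1)})) − 2Δ·exp(i k_{Qj})) = 0, where π_j is the transposition of j and j+1 and Q∘π_j applies π_j first. Define f(x₁,…,x_M) = Σ_{P ∈ S_M} B(P) · exp(i Σ_{ℓ=1}^M k_{Pℓ} x_ℓ) for integer coordinates. Then for every j ∈ {1,…,M−1}, every integer t, and all integers x₁,…,x_{j−1}, x_{j+2},…,x_M: f(x₁,…,x_{j−1}, t, t, x_{j+2},…,x_M)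 + f(x₁,…,x_{j−1}, t+1, t+1, x_{j+2},…,x_M) − 2Δ · f(x₁,…,x_{j−1}, t, t+1, x_{j+2},…,x_M) = 0 (the collision conditions (E.5) follow from the vanishing conditions (E.14), Appendix E.A). -/
open Finset

/-- A general linear combination of plane waves:
`f(x₁,…,x_M) = Σ_{P ∈ S_M} B(P) · exp(i Σ_ℓ k_{Pℓ} x_ℓ)` at integer coordinates. -/
noncomputable def planeWave (M : ℕ) (k : Fin M → ℂ) (B : Equiv.Perm (Fin M) → ℂ)
    (x : Fin M → ℤ) : ℂ :=
  ∑ P : Equiv.Perm (Fin M), B P * Complex.exp (Complex.I * ∑ j : Fin M, k (P j) * (x j : ℂ))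

/-- Appendix E.A: the vanishing conditions (E.14) on the amplitudes `B(P)` imply the
collision conditions (E.5): `f(…, t, t, …) + f(…, t+1, t+1, …) − 2Δ f(…, t, t+1, …) = 0`
at adjacent positions `j, j+1`, for all values of the remaining coordinates. -/
theorem collision_from_vanishing (M : ℕ) (Δ : ℂ) (k : Fin M → ℂ)
    (B : Equiv.Perm (Fin M) → ℂ)
    (hvan : ∀ (Q : Equiv.Perm (Fin M)) (j : Fin M) (hj : (j : ℕ) + 1 < M),
      B Q * (1 + Complex.exp (Complex.I * (k (Q j) + k (Q ⟨(j : ℕ) + 1, hj⟩)))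
              - 2 * Δ * Complex.exp (Complex.I * k (Q ⟨(j : ℕ) + 1, hj⟩)))
        + B (Q * Equiv.swap j ⟨(j : ℕ) + 1, hj⟩)
            * (1 + Complex.exp (Complex.I * (k (Q j) + k (Q ⟨(j : ℕ) + 1, hj⟩)))
                - 2 * Δ * Complex.exp (Complex.I * k (Q j))) = 0) :
    ∀ (j : Fin M) (hj : (j : ℕ) + 1 < M) (t : ℤ) (x : Fin M → ℤ),
      planeWave M k B (Function.update (Function.update x j t) ⟨(j : ℕ) + 1, hj⟩ t)
        + planeWave M k B
            (Function.update (Function.update x j (t + 1)) ⟨(j : ℕ) + 1, hj⟩ (t + 1))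
        - 2 * Δ * planeWave M k B
            (Function.update (Function.update x j t) ⟨(j : ℕ) + 1, hj⟩ (t + 1))
      = 0 := by
  intro j hj t x
  set j' : Fin M := ⟨(j : ℕ) + 1, hj⟩ with hj'def
  have hne : j ≠ j' := by
    intro h
    have : (j : ℕ) = (j : ℕ) + 1 := congrArg Fin.val h
    omega
  set s := Equiv.swap j j' with hs
  set R : Equiv.Perm (Fin M) → ℂ :=
    fun P => ∑ ℓ ∈ (Finset.univ.erase j').erase j, k (P ℓ) * (x ℓ : ℂ) with hR
  have key : ∀ (P : Equiv.Perm (Fin M)) (a b : ℤ),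
      (∑ ℓ : Fin M, k (P ℓ) * ((Function.update (Function.update x j a) j' b ℓ : ℤ) : ℂ))
        = k (P j) * (a : ℂ) + k (P j') * (b : ℂ) + R P := by
    intro P a b
    have hjmem : j ∈ Finset.univ.erase j' := Finset.mem_erase.2 ⟨hne, Finset.mem_univ j⟩
    rw [← Finset.add_sum_erase _ _ (Finset.mem_univ j'),
        ← Finset.add_sum_erase _ _ hjmem]
    have h1 : Function.update (Function.update x j a) j' b j' = b :=
      Function.update_self _ _ _
    have h2 : Function.update (Function.update x j a) j' b j = a := by
      rw [Function.update_of_ne hne, Function.update_self]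
    rw [h1, h2]
    have h3 : ∑ ℓ ∈ (Finset.univ.erase j').erase j,
        k (P ℓ) * ((Function.update (Function.update x j a) j' b ℓ : ℤ) : ℂ) = R P := by
      apply Finset.sum_congr rfl
      intro ℓ hℓ
      have hℓj : ℓ ≠ j := (Finset.mem_erase.1 hℓ).1
      have hℓj' : ℓ ≠ j' := (Finset.mem_erase.1 (Finset.mem_erase.1 hℓ).2).1
      rw [Function.update_of_ne hℓj', Function.update_of_ne hℓj]
    rw [h3]; ring
  set g : Equiv.Perm (Fin M) → ℂ := fun P =>
    B P * Complex.exp (Complex.I * (R P + (k (P j) + k (P j')) * (t : ℂ)))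
      * (1 + Complex.exp (Complex.I * (k (P j) + k (P j')))
          - 2 * Δ * Complex.exp (Complex.I * k (P j'))) with hg
  have hmain : planeWave M k B (Function.update (Function.update x j t) j' t)
        + planeWave M k B (Function.update (Function.update x j (t + 1)) j' (t + 1))
        - 2 * Δ * planeWave M k B (Function.update (Function.update x j t) j' (t + 1))
      = ∑ P : Equiv.Perm (Fin M), g P := by
    unfold planeWave
    rw [Finset.mul_sum, ← Finset.sum_add_distrib, ← Finset.sum_sub_distrib]
    apply Finset.sum_congr rfl
    intro P _
    rw [key P t t, key P (t + 1) (t + 1), key P t (t + 1), hg]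
    push_cast
    set c1 := k (P j)
    set c2 := k (P j')
    set r := R P
    set I := Complex.I
    have e1 : I * (c1 * (t : ℂ) + c2 * (t : ℂ) + r)
        = I * (r + (c1 + c2) * (t : ℂ)) := by ring
    have e2 : I * (c1 * ((t : ℂ) + 1) + c2 * ((t : ℂ) + 1) + r)
        = I * (r + (c1 + c2) * (t : ℂ)) + I * (c1 + c2) := by ring
    have e3 : I * (c1 * (t : ℂ) + c2 * ((t : ℂ) + 1) + r)
        = I * (r + (c1 + c2) * (t : ℂ)) + I * c2 := by ring
    rw [e1, e2, e3, Complex.exp_add, Complex.exp_add]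
    ring
  rw [hmain]
  have hdouble : (∑ P : Equiv.Perm (Fin M), g P) + (∑ P : Equiv.Perm (Fin M), g P) = 0 := by
    have hcomp : (∑ P : Equiv.Perm (Fin M), g P)
        = ∑ P : Equiv.Perm (Fin M), g (P * s) :=
      (Equiv.sum_comp (Equiv.mulRight s) g).symm
    nth_rewrite 2 [hcomp]
    rw [← Finset.sum_add_distrib]
    apply Finset.sum_eq_zero
    intro P _
    have hsj : (P * s) j = P j' := by
      simp [hs, Equiv.Perm.mul_apply, Equiv.swap_apply_left]
    have hsj' : (P * s) j' = P j := by
      simp [hs, Equiv.Perm.mul_apply, Equiv.swap_apply_right]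
    have hRs : R (P * s) = R P := by
      apply Finset.sum_congr rfl
      intro ℓ hℓ
      have hℓj : ℓ ≠ j := (Finset.mem_erase.1 hℓ).1
      have hℓj' : ℓ ≠ j' := (Finset.mem_erase.1 (Finset.mem_erase.1 hℓ).2).1
      rw [Equiv.Perm.mul_apply, hs, Equiv.swap_apply_of_ne_of_ne hℓj hℓj']
    have hv := hvan P j hj
    rw [hg]
    simp only [hsj, hsj', hRs]
    have hc : k (P j') + k (P j) = k (P j) + k (P j') := add_comm _ _
    rw [hc]
    have : B P * (1 + Complex.exp (Complex.I * (k (P j) + k (P j')))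
              - 2 * Δ * Complex.exp (Complex.I * k (P j')))
        + B (P * s) * (1 + Complex.exp (Complex.I * (k (P j) + k (P j')))
              - 2 * Δ * Complex.exp (Complex.I * k (P j))) = 0 := hv
    calc B P * Complex.exp (Complex.I * (R P + (k (P j) + k (P j')) * (t : ℂ)))
          * (1 + Complex.exp (Complex.I * (k (P j) + k (P j')))
              - 2 * Δ * Complex.exp (Complex.I * k (P j')))
        + B (P * s) * Complex.exp (Complex.I * (R P + (k (P j) + k (P j')) * (t : ℂ)))
          * (1 + Complex.exp (Complex.I * (k (P j) + k (P j')))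
              - 2 * Δ * Complex.exp (Complex.I * k (P j)))
        = Complex.exp (Complex.I * (R P + (k (P j) + k (P j')) * (t : ℂ)))
          * (B P * (1 + Complex.exp (Complex.I * (k (P j) + k (P j')))
              - 2 * Δ * Complex.exp (Complex.I * k (P j')))
            + B (P * s) * (1 + Complex.exp (Complex.I * (k (P j) + k (P j')))
              - 2 * Δ * Complex.exp (Complex.I * k (P j)))) := by ring
      _ = 0 := by rw [this, mul_zero]
  exact add_self_eq_zero.1 hdouble
end
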